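/- arXiv:0902.1158 — 11 statements merged into one kernel-verified Lean document; each statement's English description precedes it below -/
import Mathlib

section
/- Fix μ > 0. Define v_R(ψ,t) = -μ·coth(2μt) + μ·tanh(2μt)·sin²ψ for ψ ∈ (-π/2, π/2) and t < 0. Then v_R(ψ,t) > 0 for all such (ψ,t), and v_R satisfies the radial pressure equation ∂_t v = v·(∂_ψψ v - tan(ψ)·∂_ψ v) - (∂_ψ v)² + 2v² at every point of (-π/2, π/2) × (-∞, 0). -/
open Real Set

/-- The Rosenau solution in radial spherical coordinates:
`v_R(ψ,t) = -μ·coth(2μt) + μ·tanh(2μt)·sin²ψ`. -/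
noncomputable def rosenau (μ ψ t : ℝ) : ℝ :=
  -μ * (Real.cosh (2 * μ * t) / Real.sinh (2 * μ * t))
    + μ * Real.tanh (2 * μ * t) * (Real.sin ψ) ^ 2

/-- The Rosenau solution is positive on `(-π/2, π/2) × (-∞, 0)` and satisfies the
radial pressure equation `v_t = v·(v_ψψ - tan ψ · v_ψ) - v_ψ² + 2v²` there. -/
theorem rosenau_pos_and_solves (μ : ℝ) (hμ : 0 < μ) :
    ∀ ψ ∈ Set.Ioo (-(π / 2)) (π / 2), ∀ t < (0 : ℝ),
      0 < rosenau μ ψ t ∧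
      deriv (fun s => rosenau μ ψ s) t =
        rosenau μ ψ t * (deriv (deriv (fun s => rosenau μ s t)) ψ
            - Real.tan ψ * deriv (fun s => rosenau μ s t) ψ)
          - (deriv (fun s => rosenau μ s t) ψ) ^ 2 + 2 * (rosenau μ ψ t) ^ 2 := by
  intro ψ hψ t ht
  have hx : 2 * μ * t < 0 := by nlinarith
  set x := 2 * μ * t with hxdef
  have hs : Real.sinh x < 0 := Real.sinh_neg_iff.mpr hx
  have hs0 : Real.sinh x ≠ 0 := ne_of_lt hs
  have hc : 0 < Real.cosh x := Real.cosh_pos x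
  have hc0 : Real.cosh x ≠ 0 := ne_of_gt hc
  have hcψ : 0 < Real.cos ψ := Real.cos_pos_of_mem_Ioo hψ
  have hcψ0 : Real.cos ψ ≠ 0 := ne_of_gt hcψ
  have hch : Real.cosh x ^ 2 = Real.sinh x ^ 2 + 1 := Real.cosh_sq x
  have hsin2 : Real.sin ψ ^ 2 = 1 - Real.cos ψ ^ 2 := Real.sin_sq ψ
  -- positivity
  have hpos : 0 < rosenau μ ψ t := by
    have h1 : rosenau μ ψ t * (Real.sinh x * Real.cosh x)
        = μ * (Real.sinh x ^ 2 * Real.sin ψ ^ 2 - Real.cosh x ^ 2) := by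
      rw [rosenau, ← hxdef, Real.tanh_eq_sinh_div_cosh]
      field_simp
      ring
    have hq : Real.sin ψ ^ 2 ≤ 1 := by nlinarith [sq_nonneg (Real.cos ψ)]
    have hnum : μ * (Real.sinh x ^ 2 * Real.sin ψ ^ 2 - Real.cosh x ^ 2) < 0 := by
      have h3 : Real.sinh x ^ 2 * Real.sin ψ ^ 2 ≤ Real.sinh x ^ 2 * 1 :=
        mul_le_mul_of_nonneg_left hq (sq_nonneg _)
      nlinarith
    have hden : Real.sinh x * Real.cosh x < 0 := mul_neg_of_neg_of_pos hs hc
    have h2 : rosenau μ ψ t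
        = μ * (Real.sinh x ^ 2 * Real.sin ψ ^ 2 - Real.cosh x ^ 2)
          / (Real.sinh x * Real.cosh x) :=
      (eq_div_iff (ne_of_lt hden)).mpr h1
    rw [h2]
    exact div_pos_of_neg_of_neg hnum hden
  refine ⟨hpos, ?_⟩
  -- spatial derivatives
  have hd1 : ∀ y : ℝ, HasDerivAt (fun s => rosenau μ s t)
      (μ * Real.tanh x * (2 * Real.sin y * Real.cos y)) y := by
    intro y
    have hfe : (fun s => rosenau μ s t)
        = fun s => -μ * (Real.cosh x / Real.sinh x) + μ * Real.tanh x * Real.sin s ^ 2 := by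
      funext s; simp only [rosenau, ← hxdef]
    rw [hfe]
    have hpow : HasDerivAt (fun s : ℝ => Real.sin s ^ 2) (2 * Real.sin y * Real.cos y) y := by
      simpa using (Real.hasDerivAt_sin y).fun_pow 2
    exact (hpow.const_mul (μ * Real.tanh x)).const_add (-μ * (Real.cosh x / Real.sinh x))
  have e1 : deriv (fun s => rosenau μ s t)
      = fun y => μ * Real.tanh x * (2 * Real.sin y * Real.cos y) :=
    funext fun y => (hd1 y).deriv
  have hd2 : HasDerivAt (fun y => μ * Real.tanh x * (2 * Real.sin y * Real.cos y))
      (μ * Real.tanh x * (2 * (Real.cos ψ ^ 2 - Real.sin ψ ^ 2))) ψ := by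
    have hfe : (fun y => μ * Real.tanh x * (2 * Real.sin y * Real.cos y))
        = fun y => 2 * (μ * Real.tanh x) * (Real.sin y * Real.cos y) := by
      funext y; ring
    rw [hfe]
    have h := ((Real.hasDerivAt_sin ψ).fun_mul (Real.hasDerivAt_cos ψ)).const_mul
      (2 * (μ * Real.tanh x))
    exact h.congr_deriv (by ring)
  have e2 : deriv (deriv (fun s => rosenau μ s t)) ψ
      = μ * Real.tanh x * (2 * (Real.cos ψ ^ 2 - Real.sin ψ ^ 2)) := by
    rw [e1]; exact hd2.deriv
  -- time derivative
  have hlin : HasDerivAt (fun s : ℝ => 2 * μ * s) (2 * μ) t := by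
    simpa using (hasDerivAt_id t).const_mul (2 * μ)
  have hsinh : HasDerivAt (fun s : ℝ => Real.sinh (2 * μ * s)) (Real.cosh x * (2 * μ)) t :=
    (Real.hasDerivAt_sinh x).comp t hlin
  have hcosh : HasDerivAt (fun s : ℝ => Real.cosh (2 * μ * s)) (Real.sinh x * (2 * μ)) t :=
    (Real.hasDerivAt_cosh x).comp t hlin
  have efun2 : (fun s => rosenau μ ψ s)
      = fun s => -μ * (Real.cosh (2 * μ * s) / Real.sinh (2 * μ * s))
          + μ * (Real.sinh (2 * μ * s) / Real.cosh (2 * μ * s)) * Real.sin ψ ^ 2 := by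
    funext s; simp only [rosenau, Real.tanh_eq_sinh_div_cosh]
  have hdt := (((hcosh.fun_div hsinh hs0).const_mul (-μ)).fun_add
    (((hsinh.fun_div hcosh hc0).const_mul μ).mul_const (Real.sin ψ ^ 2)))
  rw [efun2, hdt.deriv, e2, e1]
  simp only [rosenau, Real.tanh_eq_sinh_div_cosh, Real.tan_eq_sin_div_cos]
  rw [← hxdef]
  field_simp
  linear_combination (Real.cosh x ^ 2 * Real.sinh x ^ 2
    + Real.sinh x ^ 4 * Real.sin ψ ^ 2) * hsin2
end

section
/- Let I ⊆ ℝ be an interval and let v: (-π/2, π/2) × I → ℝ be positive, twice continuously differentiable in ψ and continuously differentiable in t. Define w: ℝ × I → ℝ by w(x,t) = v(arctan(sinh x), t)·cosh²x. Then v satisfies the radial pressure equation ∂_t v = v·(∂_ψψ v - tan(ψ)·∂_ψ v) - (∂_ψ v)² + 2v² at every point of (-π/2, π/2) × I if and only if w satisfies the cylindrical pressure equation ∂_t w = w·∂_xx w - (∂_x w)² at every point of ℝ × I. -/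
open Real Set

private lemma phi_mem (x : ℝ) :
    Real.arctan (Real.sinh x) ∈ Set.Ioo (-(π / 2)) (π / 2) :=
  ⟨Real.neg_pi_div_two_lt_arctan _, Real.arctan_lt_pi_div_two _⟩

private lemma hasDerivAt_phi (x : ℝ) :
    HasDerivAt (fun y => Real.arctan (Real.sinh y)) (1 / Real.cosh x) x := by
  have h := (Real.hasDerivAt_arctan (Real.sinh x)).comp x (Real.hasDerivAt_sinh x)
  refine h.congr_deriv ?_
  have hc := (Real.cosh_pos x).ne'
  have h2 : 1 + Real.sinh x ^ 2 = Real.cosh x ^ 2 := by rw [Real.cosh_sq]; ring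
  rw [h2]
  field_simp

private lemma deriv1 (f : ℝ → ℝ)
    (hf : ContDiffOn ℝ 2 f (Set.Ioo (-(π / 2)) (π / 2))) (x : ℝ) :
    HasDerivAt (fun y => f (Real.arctan (Real.sinh y)) * Real.cosh y ^ 2)
      (deriv f (Real.arctan (Real.sinh x)) * Real.cosh x
        + 2 * f (Real.arctan (Real.sinh x)) * Real.sinh x * Real.cosh x) x := by
  set ψ := Real.arctan (Real.sinh x) with hψdef
  have hopen : IsOpen (Set.Ioo (-(π / 2)) (π / 2)) := isOpen_Ioo
  have hfd : DifferentiableAt ℝ f ψ :=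
    (hf.contDiffAt (hopen.mem_nhds (phi_mem x))).differentiableAt (by norm_num)
  have h1 : HasDerivAt (fun y => f (Real.arctan (Real.sinh y)))
      (deriv f ψ * (1 / Real.cosh x)) x :=
    hfd.hasDerivAt.comp x (hasDerivAt_phi x)
  have h2 := (Real.hasDerivAt_cosh x).pow 2
  have h := h1.mul h2
  refine h.congr_deriv ?_
  have hc := (Real.cosh_pos x).ne'
  simp only [Pi.pow_apply, ← hψdef]
  field_simp
  ring

private lemma deriv2 (f : ℝ → ℝ)
    (hf : ContDiffOn ℝ 2 f (Set.Ioo (-(π / 2)) (π / 2))) (x : ℝ) :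
    HasDerivAt (fun y => deriv f (Real.arctan (Real.sinh y)) * Real.cosh y
        + 2 * f (Real.arctan (Real.sinh y)) * Real.sinh y * Real.cosh y)
      (deriv (deriv f) (Real.arctan (Real.sinh x))
        + 3 * deriv f (Real.arctan (Real.sinh x)) * Real.sinh x
        + 2 * f (Real.arctan (Real.sinh x)) * (Real.cosh x ^ 2 + Real.sinh x ^ 2)) x := by
  set ψ := Real.arctan (Real.sinh x) with hψdef
  have hopen : IsOpen (Set.Ioo (-(π / 2)) (π / 2)) := isOpen_Ioo
  have hmem : Set.Ioo (-(π / 2)) (π / 2) ∈ nhds ψ := hopen.mem_nhds (phi_mem x)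
  have hfd : DifferentiableAt ℝ f ψ :=
    (hf.contDiffAt hmem).differentiableAt (by norm_num)
  have hdf : ContDiffOn ℝ 1 (deriv f) (Set.Ioo (-(π / 2)) (π / 2)) :=
    hf.deriv_of_isOpen hopen (by norm_num)
  have hdfd : DifferentiableAt ℝ (deriv f) ψ :=
    (hdf.contDiffAt hmem).differentiableAt one_ne_zero
  have hA : HasDerivAt (fun y => deriv f (Real.arctan (Real.sinh y)) * Real.cosh y)
      ((deriv (deriv f) ψ * (1 / Real.cosh x)) * Real.cosh x + deriv f ψ * Real.sinh x) x :=
    by have := (hdfd.hasDerivAt.comp x (hasDerivAt_phi x)).mul (Real.hasDerivAt_cosh x); exact this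
  have hB : HasDerivAt (fun y => 2 * f (Real.arctan (Real.sinh y)) * Real.sinh y * Real.cosh y)
      (((deriv f ψ * (1 / Real.cosh x)) * 2 * Real.sinh x
          + 2 * f ψ * Real.cosh x) * Real.cosh x
        + 2 * f ψ * Real.sinh x * Real.sinh x) x := by
    have := (((hfd.hasDerivAt.comp x (hasDerivAt_phi x)).const_mul 2).mul
      (Real.hasDerivAt_sinh x)).mul (Real.hasDerivAt_cosh x)
    simp only [Function.comp_def] at this
    refine this.congr_deriv ?_; simp only [Pi.mul_apply, ← hψdef]; ring
  have h := hA.add hB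
  refine h.congr_deriv ?_
  have hc := (Real.cosh_pos x).ne'
  field_simp
  ring

/-- Equivalence of the radial pressure equation on the sphere,
`v_t = v·(v_ψψ - tan ψ · v_ψ) - v_ψ² + 2v²` on `(-π/2, π/2) × I`, with the
cylindrical pressure equation `w_t = w·w_xx - w_x²` on `ℝ × I`, where
`w(x,t) = v(arctan(sinh x), t)·cosh² x` (Mercator's projection). -/
theorem radial_iff_cylindrical_pressure
    (I : Set ℝ) (hI : I.OrdConnected)
    (v : ℝ → ℝ → ℝ)
    (hpos : ∀ ψ ∈ Set.Ioo (-(π / 2)) (π / 2), ∀ t ∈ I, 0 < v ψ t)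
    (hψreg : ∀ t ∈ I, ContDiffOn ℝ 2 (fun ψ => v ψ t) (Set.Ioo (-(π / 2)) (π / 2)))
    (htreg : ∀ ψ ∈ Set.Ioo (-(π / 2)) (π / 2), ContDiffOn ℝ 1 (fun t => v ψ t) I)
    (w : ℝ → ℝ → ℝ)
    (hw : ∀ x t, w x t = v (Real.arctan (Real.sinh x)) t * (Real.cosh x) ^ 2) :
    (∀ ψ ∈ Set.Ioo (-(π / 2)) (π / 2), ∀ t ∈ I,
        deriv (fun s => v ψ s) t =
          v ψ t * (deriv (deriv (fun s => v s t)) ψ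
              - Real.tan ψ * deriv (fun s => v s t) ψ)
            - (deriv (fun s => v s t) ψ) ^ 2 + 2 * (v ψ t) ^ 2)
    ↔ (∀ x : ℝ, ∀ t ∈ I,
        deriv (fun s => w x s) t =
          w x t * deriv (deriv (fun s => w s t)) x
            - (deriv (fun s => w s t) x) ^ 2) := by
  -- general computations, for any t ∈ I and x ∈ ℝ
  have hwx : ∀ t ∈ I, (fun s => w s t) =
      fun y => (fun p => v p t) (Real.arctan (Real.sinh y)) * Real.cosh y ^ 2 := by
    intro t ht; funext s; exact hw s t
  have hD1 : ∀ t ∈ I, ∀ x : ℝ,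
      deriv (fun s => w s t) x =
        deriv (fun p => v p t) (Real.arctan (Real.sinh x)) * Real.cosh x
          + 2 * v (Real.arctan (Real.sinh x)) t * Real.sinh x * Real.cosh x := by
    intro t ht x
    rw [hwx t ht]
    exact (deriv1 _ (hψreg t ht) x).deriv
  have hD2 : ∀ t ∈ I, ∀ x : ℝ,
      deriv (deriv (fun s => w s t)) x =
        deriv (deriv (fun p => v p t)) (Real.arctan (Real.sinh x))
          + 3 * deriv (fun p => v p t) (Real.arctan (Real.sinh x)) * Real.sinh x
          + 2 * v (Real.arctan (Real.sinh x)) t * (Real.cosh x ^ 2 + Real.sinh x ^ 2) := by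
    intro t ht x
    have : deriv (fun s => w s t) =
        fun y => deriv (fun p => v p t) (Real.arctan (Real.sinh y)) * Real.cosh y
          + 2 * v (Real.arctan (Real.sinh y)) t * Real.sinh y * Real.cosh y := by
      funext y; exact hD1 t ht y
    rw [this]
    exact (deriv2 _ (hψreg t ht) x).deriv
  have hDt : ∀ t : ℝ, ∀ x : ℝ,
      deriv (fun s => w x s) t =
        deriv (fun s => v (Real.arctan (Real.sinh x)) s) t * Real.cosh x ^ 2 := by
    intro t x
    have : (fun s => w x s) = fun s => v (Real.arctan (Real.sinh x)) s * Real.cosh x ^ 2 := by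
      funext s; exact hw x s
    rw [this, deriv_mul_const_field]
  constructor
  · intro h x t ht
    set ψ := Real.arctan (Real.sinh x) with hψdef
    have hrad := h ψ (phi_mem x) t ht
    rw [Real.tan_arctan] at hrad
    rw [hDt t x, hD1 t ht x, hD2 t ht x, hw x t, hrad]
    have hc2 := Real.cosh_sq x
    linear_combination (-2 * (v ψ t) ^ 2 * Real.cosh x ^ 2) * hc2
  · intro h ψ hψ t ht
    set x := Real.arsinh (Real.tan ψ) with hxdef
    have hs : Real.sinh x = Real.tan ψ := Real.sinh_arsinh _
    have hφ : Real.arctan (Real.sinh x) = ψ := by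
      rw [hs, Real.arctan_tan hψ.1 hψ.2]
    have hcyl := h x t ht
    rw [hDt t x, hD1 t ht x, hD2 t ht x, hw x t, hφ, hs] at hcyl
    have hc2 := Real.cosh_sq x
    rw [hs] at hc2
    have hcne : Real.cosh x ^ 2 ≠ 0 := pow_ne_zero 2 (Real.cosh_pos x).ne'
    apply mul_right_cancel₀ hcne
    rw [hcyl]
    linear_combination (2 * (v ψ t) ^ 2 * Real.cosh x ^ 2) * hc2
  done
end

section
/- Let t₀ < 0 and C₀ > 0. Let v: [-π/2, π/2] × (-∞, t₀] → ℝ be positive, twice continuously differentiable in ψ up to the endpoints with ∂_ψ v(±π/2, t) = 0 for every t, continuously differentiable in t, and satisfy the radial pressure equation ∂_t v = v·(∂_ψψ v - tan(ψ)·∂_ψ v) - (∂_ψ v)² + 2v² on (-π/2, π/2) × (-∞, t₀]. Set R := (∂_t v)/v, and assume: (a) v ≤ C₀ and 0 < R ≤ C₀ everywhere; (b) the Harnack inequality ∂_ψψ R - tan(ψ)·∂_ψ R + R²/v ≥ (∂_ψ R)²/R holds on (-π/2, π/2) × (-∞, t₀]. Then there is a constant C, depending only on C₀, such that |∂_ψψ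 v - tan(ψ)·∂_ψ v| ≤ C and (∂_ψ v)²/v ≤ C on (-π/2, π/2) × (-∞, t₀]. -/
open Real Set

set_option maxHeartbeats 1600000

/-- First spatial derivative `∂_ψ v`. -/
noncomputable def dps (v : ℝ → ℝ → ℝ) (ψ t : ℝ) : ℝ := deriv (fun s => v s t) ψ

/-- Second spatial derivative `∂_ψψ v`. -/
noncomputable def dpsps (v : ℝ → ℝ → ℝ) (ψ t : ℝ) : ℝ := deriv (deriv (fun s => v s t)) ψ

/-- Time derivative `∂_t v`. -/
noncomputable def dtime (v : ℝ → ℝ → ℝ) (ψ t : ℝ) : ℝ := deriv (fun s => v ψ s) t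

/-- Scalar curvature `R = v_t / v`. -/
noncomputable def scurv (v : ℝ → ℝ → ℝ) (ψ t : ℝ) : ℝ := dtime v ψ t / v ψ t


private lemma arith_cancel (C₀ w₀ c₀ p K : ℝ) (hc₀ : 0 < c₀)
    (h : p ^ 2 * c₀ ^ 2 ≤ K * c₀ ^ 2) : p ^ 2 ≤ K :=
  le_of_mul_le_mul_right h (by positivity)

private lemma arith_A (C₀ w₀ c₀ s₀ g p : ℝ) (hw₀ : 0 < w₀) (hc₀ : 0 < c₀)
    (hs₁ : s₀ ≤ 1) (hpc : p * c₀ = (g - 2 * s₀) * w₀) (hX0 : 0 ≤ 2 * s₀ - g)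
    (hgpos : 0 < g) (hglt : g < 2)
    (h5 : 2 ≤ g ^ 2 / 2 + C₀ * c₀ ^ 2 / w₀) : p ^ 2 ≤ 16 * C₀ * w₀ := by
  have hps : p ^ 2 * c₀ ^ 2 = (g - 2 * s₀) ^ 2 * w₀ ^ 2 := by
    rw [← mul_pow, hpc, mul_pow]
  have h6 : C₀ * c₀ ^ 2 / w₀ * w₀ = C₀ * c₀ ^ 2 := div_mul_cancel₀ _ hw₀.ne'
  have h7 := mul_le_mul_of_nonneg_right h5 hw₀.le
  rw [add_mul, h6] at h7
  have key : w₀ * (4 - g ^ 2) ≤ 2 * C₀ * c₀ ^ 2 := by linarith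
  have hC₀ : 0 < C₀ := by
    by_contra hcon
    push_neg at hcon
    have h1 : (0:ℝ) < 2 - g := by linarith
    have h2 : (0:ℝ) < 2 + g := by linarith
    nlinarith [mul_pos hw₀ (mul_pos h1 h2),
      mul_nonpos_of_nonpos_of_nonneg hcon (sq_nonneg c₀)]
  have hsq : (g - 2 * s₀) ^ 2 ≤ 4 - g ^ 2 := by nlinarith
  have h9 : p ^ 2 * c₀ ^ 2 ≤ 2 * C₀ * w₀ * c₀ ^ 2 := by
    nlinarith [hps, mul_le_mul_of_nonneg_right hsq (sq_nonneg w₀),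
      mul_le_mul_of_nonneg_left key hw₀.le]
  have h10 : p ^ 2 ≤ 2 * C₀ * w₀ :=
    arith_cancel C₀ w₀ c₀ p (2 * C₀ * w₀) hc₀ h9
  nlinarith [mul_pos hC₀ hw₀]

private lemma arith_B (C₀ w₀ c₀ s₀ g p : ℝ) (hw₀ : 0 < w₀) (hc₀ : 0 < c₀)
    (hwC : w₀ ≤ C₀) (hpyth : s₀ ^ 2 + c₀ ^ 2 = 1) (hs₀np : s₀ ≤ 0) (hs₀ge : -1 ≤ s₀)
    (hpc : p * c₀ = (g - 2 * s₀) * w₀) (hX0 : 0 ≤ 2 * s₀ - g) (hggt : -2 < g) :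
    p ^ 2 ≤ 16 * C₀ * w₀ := by
  have hps : p ^ 2 * c₀ ^ 2 = (g - 2 * s₀) ^ 2 * w₀ ^ 2 := by
    rw [← mul_pow, hpc, mul_pow]
  have h1s : 1 + s₀ ≤ c₀ ^ 2 := by nlinarith
  have hXle : 2 * s₀ - g ≤ 2 * (1 + s₀) := by linarith
  have hsq : (g - 2 * s₀) ^ 2 ≤ 4 * c₀ ^ 2 := by
    nlinarith [mul_le_mul_of_nonneg_left hXle hX0,
      mul_nonneg (by linarith : (0:ℝ) ≤ 1 + s₀) (by linarith : (0:ℝ) ≤ -s₀)]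
  have h9 : p ^ 2 * c₀ ^ 2 ≤ 16 * C₀ * w₀ * c₀ ^ 2 := by
    nlinarith [hps, mul_le_mul_of_nonneg_right hsq (sq_nonneg w₀),
      mul_le_mul_of_nonneg_right hwC hw₀.le, sq_nonneg c₀, hc₀,
      mul_le_mul_of_nonneg_left (mul_le_mul_of_nonneg_right hwC hw₀.le)
        (by positivity : (0:ℝ) ≤ 4 * c₀ ^ 2)]
  exact arith_cancel C₀ w₀ c₀ p (16 * C₀ * w₀) hc₀ h9

private lemma arith_C (C₀ w₀ c₀ s₀ g p : ℝ) (hw₀ : 0 < w₀) (hc₀ : 0 < c₀)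
    (hC₀ : 0 < C₀) (hs₁ : s₀ ≤ 1)
    (hpc : p * c₀ = (g - 2 * s₀) * w₀) (hX0 : 0 ≤ 2 * s₀ - g) (hggt : -2 < g)
    (key3 : w₀ ≤ C₀ * c₀ ^ 2) : p ^ 2 ≤ 16 * C₀ * w₀ := by
  have hps : p ^ 2 * c₀ ^ 2 = (g - 2 * s₀) ^ 2 * w₀ ^ 2 := by
    rw [← mul_pow, hpc, mul_pow]
  have hX4 : 2 * s₀ - g ≤ 4 := by linarith
  have hsq : (g - 2 * s₀) ^ 2 ≤ 16 := by
    nlinarith [mul_le_mul_of_nonneg_left hX4 hX0]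
  have h9 : p ^ 2 * c₀ ^ 2 ≤ 16 * C₀ * w₀ * c₀ ^ 2 := by
    nlinarith [hps, mul_le_mul_of_nonneg_right hsq (sq_nonneg w₀),
      mul_le_mul_of_nonneg_left key3 (by positivity : (0:ℝ) ≤ 16 * w₀)]
  exact arith_cancel C₀ w₀ c₀ p (16 * C₀ * w₀) hc₀ h9

/-- The core one-dimensional a priori estimate, for points where the spatial
derivative is nonpositive.  Here `w` is the spatial profile at a fixed time,
positive, bounded by `C₀`, of class `C²` on the closed interval, and with
scalar curvature `R = Δw - w'²/w + 2w` in `(0, C₀]` on the open interval. -/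
private lemma core_neg (C₀ : ℝ) (w : ℝ → ℝ)
    (hw2 : ContDiffOn ℝ 2 w (Set.Icc (-(π / 2)) (π / 2)))
    (hpos : ∀ x ∈ Set.Icc (-(π / 2)) (π / 2), 0 < w x)
    (hle : ∀ x ∈ Set.Icc (-(π / 2)) (π / 2), w x ≤ C₀)
    (hR : ∀ x ∈ Set.Ioo (-(π / 2)) (π / 2),
      0 < deriv (deriv w) x - Real.tan x * deriv w x - (deriv w x) ^ 2 / w x + 2 * w x ∧
      deriv (deriv w) x - Real.tan x * deriv w x - (deriv w x) ^ 2 / w x + 2 * w x ≤ C₀)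
    (ψ₀ : ℝ) (hψ₀ : ψ₀ ∈ Set.Ioo (-(π / 2)) (π / 2)) (hp : deriv w ψ₀ ≤ 0) :
    (deriv w ψ₀) ^ 2 / w ψ₀ ≤ 16 * C₀ := by
  have hπ : (0:ℝ) < π / 2 := by positivity
  have hIuniq : UniqueDiffOn ℝ (Set.Icc (-(π / 2)) (π / 2)) := uniqueDiffOn_Icc (by linarith)
  have hmem : ∀ {x : ℝ}, x ∈ Set.Ioo (-(π / 2)) (π / 2) →
      Set.Icc (-(π / 2)) (π / 2) ∈ nhds x := fun hx => Icc_mem_nhds hx.1 hx.2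
  have hw0 : ∀ x ∈ Set.Icc (-(π / 2)) (π / 2), w x ≠ 0 := fun x hx => (hpos x hx).ne'
  have hwd : ∀ x ∈ Set.Ioo (-(π / 2)) (π / 2), HasDerivAt w (deriv w x) x := fun x hx =>
    ((hw2.contDiffAt (hmem hx)).differentiableAt (by norm_num)).hasDerivAt
  have hw1 : ContDiffOn ℝ 1 (deriv w) (Set.Ioo (-(π / 2)) (π / 2)) :=
    (hw2.mono Set.Ioo_subset_Icc_self).deriv_of_isOpen isOpen_Ioo (by norm_num)
  have hwdd : ∀ x ∈ Set.Ioo (-(π / 2)) (π / 2),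
      HasDerivAt (deriv w) (deriv (deriv w) x) x := fun x hx =>
    (((hw1.differentiableOn (by norm_num)) x hx).differentiableAt (isOpen_Ioo.mem_nhds hx)).hasDerivAt
  set G : ℝ → ℝ := fun x =>
    derivWithin w (Set.Icc (-(π / 2)) (π / 2)) x * Real.cos x / w x + 2 * Real.sin x with hGdef
  have hGloc : ∀ x ∈ Set.Ioo (-(π / 2)) (π / 2),
      G x = deriv w x * Real.cos x / w x + 2 * Real.sin x := by
    intro x hx
    simp only [hGdef]
    rw [derivWithin_of_mem_nhds (hmem hx)]
  have hG' : ∀ x ∈ Set.Ioo (-(π / 2)) (π / 2), HasDerivAt G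
      (Real.cos x * (deriv (deriv w) x - Real.tan x * deriv w x
        - (deriv w x) ^ 2 / w x + 2 * w x) / w x) x := by
    intro x hx
    have hcos : 0 < Real.cos x := Real.cos_pos_of_mem_Ioo hx
    have hwx : w x ≠ 0 := hw0 x (Set.Ioo_subset_Icc_self hx)
    have h1 : HasDerivAt (fun y => deriv w y * Real.cos y / w y + 2 * Real.sin y)
        (((deriv (deriv w) x * Real.cos x + deriv w x * (-Real.sin x)) * w x
          - deriv w x * Real.cos x * deriv w x) / w x ^ 2 + 2 * Real.cos x) x :=
      (((hwdd x hx).mul (Real.hasDerivAt_cos x)).div (hwd x hx) hwx).add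
        ((Real.hasDerivAt_sin x).const_mul 2)
    have heq : G =ᶠ[nhds x] fun y => deriv w y * Real.cos y / w y + 2 * Real.sin y := by
      filter_upwards [isOpen_Ioo.mem_nhds hx] with y hy
      exact hGloc y hy
    have h2 := h1.congr_of_eventuallyEq heq
    refine h2.congr_deriv ?_
    rw [Real.tan_eq_sin_div_cos]
    field_simp
    ring
  have hGc : ContinuousOn G (Set.Icc (-(π / 2)) (π / 2)) := by
    apply ContinuousOn.add
    · exact ((hw2.continuousOn_derivWithin hIuniq (by norm_num)).mul
        Real.continuous_cos.continuousOn).div hw2.continuousOn hw0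
    · exact (continuous_const.mul Real.continuous_sin).continuousOn
  have hGmono : StrictMonoOn G (Set.Icc (-(π / 2)) (π / 2)) := by
    apply strictMonoOn_of_deriv_pos (convex_Icc _ _) hGc
    rw [interior_Icc]
    intro x hx
    rw [(hG' x hx).deriv]
    have h1 := (hR x hx).1
    have h2 := Real.cos_pos_of_mem_Ioo hx
    have h3 := hpos x (Set.Ioo_subset_Icc_self hx)
    positivity
  have hmemL : -(π / 2) ∈ Set.Icc (-(π / 2)) (π / 2) := Set.left_mem_Icc.2 (by linarith)
  have hmemR : (π / 2) ∈ Set.Icc (-(π / 2)) (π / 2) := Set.right_mem_Icc.2 (by linarith)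
  have hGR : G (π / 2) = 2 := by
    simp [hGdef, Real.cos_pi_div_two, Real.sin_pi_div_two]
  have hGL : G (-(π / 2)) = -2 := by
    simp [hGdef, Real.cos_pi_div_two, Real.sin_pi_div_two]
  have hψ₀I : ψ₀ ∈ Set.Icc (-(π / 2)) (π / 2) := Set.Ioo_subset_Icc_self hψ₀
  have hG0lt : G ψ₀ < 2 := by
    rw [← hGR]; exact hGmono hψ₀I hmemR hψ₀.2
  have hG0gt : -2 < G ψ₀ := by
    rw [← hGL]; exact hGmono hmemL hψ₀I hψ₀.1
  have hc₀ : 0 < Real.cos ψ₀ := Real.cos_pos_of_mem_Ioo hψ₀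
  have hw₀ : 0 < w ψ₀ := hpos _ hψ₀I
  have hw₀C : w ψ₀ ≤ C₀ := hle _ hψ₀I
  have hC₀ : 0 < C₀ := lt_of_lt_of_le hw₀ hw₀C
  have hG0val : G ψ₀ = deriv w ψ₀ * Real.cos ψ₀ / w ψ₀ + 2 * Real.sin ψ₀ := hGloc _ hψ₀
  have hpc : deriv w ψ₀ * Real.cos ψ₀ = (G ψ₀ - 2 * Real.sin ψ₀) * w ψ₀ := by
    have h : G ψ₀ - 2 * Real.sin ψ₀ = deriv w ψ₀ * Real.cos ψ₀ / w ψ₀ := by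
      rw [hG0val]; ring
    rw [h, div_mul_cancel₀ _ hw₀.ne']
  have hX0 : 0 ≤ 2 * Real.sin ψ₀ - G ψ₀ := by
    have h : 2 * Real.sin ψ₀ - G ψ₀ = -(deriv w ψ₀ * Real.cos ψ₀) / w ψ₀ := by
      rw [hG0val]; ring
    rw [h]
    apply div_nonneg _ hw₀.le
    nlinarith
  have hs₀le : Real.sin ψ₀ ≤ 1 := Real.sin_le_one _
  have hs₀ge : -1 ≤ Real.sin ψ₀ := Real.neg_one_le_sin _
  have hpyth : Real.sin ψ₀ ^ 2 + Real.cos ψ₀ ^ 2 = 1 := Real.sin_sq_add_cos_sq _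
  rw [div_le_iff₀ hw₀]
  by_cases hG0pos : 0 < G ψ₀
  · -- Case A: the monotone quantity `G²/2 + C₀ cos²/w` on `[ψ₀, π/2]`
    set Φ : ℝ → ℝ := fun x => (G x) ^ 2 / 2 + C₀ * (Real.cos x) ^ 2 / w x with hΦdef
    have hsub : Set.Icc ψ₀ (π / 2) ⊆ Set.Icc (-(π / 2)) (π / 2) :=
      Set.Icc_subset_Icc hψ₀.1.le le_rfl
    have hΦc : ContinuousOn Φ (Set.Icc ψ₀ (π / 2)) := by
      apply ContinuousOn.add
      · exact ((hGc.mono hsub).pow 2).div_const 2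
      · exact ((continuous_const.mul (Real.continuous_cos.pow 2)).continuousOn).div
          (hw2.continuousOn.mono hsub) (fun x hx => hw0 x (hsub hx))
    have hΦd : ∀ x ∈ Set.Ioo ψ₀ (π / 2), HasDerivAt Φ
        (G x * Real.cos x / w x * ((deriv (deriv w) x - Real.tan x * deriv w x
          - (deriv w x) ^ 2 / w x + 2 * w x) - C₀)) x := by
      intro x hx
      have hxI : x ∈ Set.Ioo (-(π / 2)) (π / 2) := ⟨lt_trans hψ₀.1 hx.1, hx.2⟩
      have hcos : 0 < Real.cos x := Real.cos_pos_of_mem_Ioo hxI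
      have hwx : w x ≠ 0 := hw0 x (Set.Ioo_subset_Icc_self hxI)
      have h1 : HasDerivAt (fun y => (G y) ^ 2 / 2)
          (2 * G x ^ 1 * (Real.cos x * (deriv (deriv w) x - Real.tan x * deriv w x
            - (deriv w x) ^ 2 / w x + 2 * w x) / w x) / 2) x := ((hG' x hxI).pow 2).div_const 2
      have h2 : HasDerivAt (fun y => C₀ * (Real.cos y) ^ 2 / w y)
          ((C₀ * (2 * Real.cos x ^ 1 * (-Real.sin x)) * w x
            - C₀ * (Real.cos x) ^ 2 * deriv w x) / w x ^ 2) x :=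
        (((Real.hasDerivAt_cos x).pow 2).const_mul C₀).div (hwd x hxI) hwx
      have h3 := h1.add h2
      refine h3.congr_deriv ?_
      rw [hGloc x hxI, Real.tan_eq_sin_div_cos]
      field_simp
      ring
    have hΦanti : AntitoneOn Φ (Set.Icc ψ₀ (π / 2)) := by
      apply antitoneOn_of_deriv_nonpos (convex_Icc _ _) hΦc
      · rw [interior_Icc]
        intro x hx
        exact (hΦd x hx).differentiableAt.differentiableWithinAt
      · rw [interior_Icc]
        intro x hx
        rw [(hΦd x hx).deriv]
        have hxI : x ∈ Set.Ioo (-(π / 2)) (π / 2) := ⟨lt_trans hψ₀.1 hx.1, hx.2⟩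
        have hcos : 0 < Real.cos x := Real.cos_pos_of_mem_Ioo hxI
        have hwx : 0 < w x := hpos x (Set.Ioo_subset_Icc_self hxI)
        have hGx : 0 < G x := lt_trans hG0pos (hGmono hψ₀I (hsub ⟨hx.1.le, hx.2.le⟩) hx.1)
        have hRle := (hR x hxI).2
        apply mul_nonpos_iff.2
        left
        constructor
        · positivity
        · linarith
    have key0 : Φ (π / 2) ≤ Φ ψ₀ :=
      hΦanti ⟨le_rfl, hψ₀.2.le⟩ ⟨hψ₀.2.le, le_rfl⟩ hψ₀.2.le
    have hΦR : Φ (π / 2) = 2 := by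
      simp [hΦdef, hGR, Real.cos_pi_div_two]
      norm_num
    rw [hΦR] at key0
    have h5 : (2:ℝ) ≤ (G ψ₀) ^ 2 / 2 + C₀ * (Real.cos ψ₀) ^ 2 / w ψ₀ := key0
    exact arith_A C₀ (w ψ₀) (Real.cos ψ₀) (Real.sin ψ₀) (G ψ₀) (deriv w ψ₀)
      hw₀ hc₀ hs₀le hpc hX0 hG0pos hG0lt h5
  · have hG0 : G ψ₀ ≤ 0 := not_lt.1 hG0pos
    by_cases hψpos : 0 < ψ₀
    · -- Case C: integrate `log w - 2 log cos` on `[0, ψ₀]`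
      set Φ : ℝ → ℝ := fun x => Real.log (w x) - 2 * Real.log (Real.cos x) with hΦdef
      have hsub2 : Set.Icc 0 ψ₀ ⊆ Set.Ioo (-(π / 2)) (π / 2) := fun x hx =>
        ⟨by linarith [hx.1], lt_of_le_of_lt hx.2 hψ₀.2⟩
      have hΦc : ContinuousOn Φ (Set.Icc 0 ψ₀) := by
        apply ContinuousOn.sub
        · exact (hw2.continuousOn.mono
            (subset_trans hsub2 Set.Ioo_subset_Icc_self)).log
            (fun x hx => hw0 x (Set.Ioo_subset_Icc_self (hsub2 hx)))
        · exact continuous_const.continuousOn.mul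
            (Real.continuous_cos.continuousOn.log
              (fun x hx => (Real.cos_pos_of_mem_Ioo (hsub2 hx)).ne'))
      have hΦd : ∀ x ∈ Set.Ioo 0 ψ₀, HasDerivAt Φ (G x / Real.cos x) x := by
        intro x hx
        have hxI : x ∈ Set.Ioo (-(π / 2)) (π / 2) := hsub2 ⟨hx.1.le, hx.2.le⟩
        have hcos : 0 < Real.cos x := Real.cos_pos_of_mem_Ioo hxI
        have hwx : w x ≠ 0 := hw0 x (Set.Ioo_subset_Icc_self hxI)
        have h1 := ((hwd x hxI).log hwx).sub
          (((Real.hasDerivAt_cos x).log hcos.ne').const_mul 2)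
        refine h1.congr_deriv ?_
        rw [hGloc x hxI]
        field_simp
        ring
      have hΦanti : AntitoneOn Φ (Set.Icc 0 ψ₀) := by
        apply antitoneOn_of_deriv_nonpos (convex_Icc _ _) hΦc
        · rw [interior_Icc]
          intro x hx
          exact (hΦd x hx).differentiableAt.differentiableWithinAt
        · rw [interior_Icc]
          intro x hx
          rw [(hΦd x hx).deriv]
          have hxI : x ∈ Set.Ioo (-(π / 2)) (π / 2) := hsub2 ⟨hx.1.le, hx.2.le⟩
          have hcos : 0 < Real.cos x := Real.cos_pos_of_mem_Ioo hxI
          have hGx : G x ≤ 0 :=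
            le_of_lt (lt_of_lt_of_le (hGmono (Set.Ioo_subset_Icc_self hxI) hψ₀I hx.2) hG0)
          exact div_nonpos_of_nonpos_of_nonneg hGx hcos.le
      have h0mem : (0:ℝ) ∈ Set.Icc (-(π / 2)) (π / 2) := ⟨by linarith, by linarith⟩
      have hw00 : 0 < w 0 := hpos 0 h0mem
      have hw0C : w 0 ≤ C₀ := hle 0 h0mem
      have key0 : Φ ψ₀ ≤ Φ 0 := hΦanti ⟨le_rfl, hψpos.le⟩ ⟨hψpos.le, le_rfl⟩ hψpos.le
      have hΦ0 : Φ 0 = Real.log (w 0) := by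
        simp [hΦdef, Real.cos_zero, Real.log_one]
      have key1 : Real.log (w ψ₀) ≤ Real.log (w 0 * (Real.cos ψ₀) ^ 2) := by
        rw [Real.log_mul hw00.ne' (by positivity), Real.log_pow]
        have hΦψ : Φ ψ₀ = Real.log (w ψ₀) - 2 * Real.log (Real.cos ψ₀) := rfl
        rw [hΦ0, hΦψ] at key0
        push_cast
        linarith only [key0]
      have key2 : w ψ₀ ≤ w 0 * (Real.cos ψ₀) ^ 2 :=
        (Real.log_le_log_iff hw₀ (by positivity)).1 key1
      have key3 : w ψ₀ ≤ C₀ * (Real.cos ψ₀) ^ 2 :=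
        le_trans key2 (mul_le_mul_of_nonneg_right hw0C (sq_nonneg _))
      exact arith_C C₀ (w ψ₀) (Real.cos ψ₀) (Real.sin ψ₀) (G ψ₀) (deriv w ψ₀)
        hw₀ hc₀ hC₀ hs₀le hpc hX0 hG0gt key3
    · -- Case B: near the south pole, pure algebra
      have hψ₀np : ψ₀ ≤ 0 := not_lt.1 hψpos
      have hs₀np : Real.sin ψ₀ ≤ 0 :=
        Real.sin_nonpos_of_nonpos_of_neg_pi_le hψ₀np (by nlinarith [Real.pi_pos, hψ₀.1])
      exact arith_B C₀ (w ψ₀) (Real.cos ψ₀) (Real.sin ψ₀) (G ψ₀) (deriv w ψ₀)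
        hw₀ hc₀ hw₀C hpyth hs₀np hs₀ge hpc hX0 hG0gt

/-- The core estimate for an arbitrary sign of the derivative, by reflection. -/
private lemma core_all (C₀ : ℝ) (w : ℝ → ℝ)
    (hw2 : ContDiffOn ℝ 2 w (Set.Icc (-(π / 2)) (π / 2)))
    (hpos : ∀ x ∈ Set.Icc (-(π / 2)) (π / 2), 0 < w x)
    (hle : ∀ x ∈ Set.Icc (-(π / 2)) (π / 2), w x ≤ C₀)
    (hR : ∀ x ∈ Set.Ioo (-(π / 2)) (π / 2),
      0 < deriv (deriv w) x - Real.tan x * deriv w x - (deriv w x) ^ 2 / w x + 2 * w x ∧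
      deriv (deriv w) x - Real.tan x * deriv w x - (deriv w x) ^ 2 / w x + 2 * w x ≤ C₀)
    (ψ₀ : ℝ) (hψ₀ : ψ₀ ∈ Set.Ioo (-(π / 2)) (π / 2)) :
    (deriv w ψ₀) ^ 2 / w ψ₀ ≤ 16 * C₀ := by
  rcases le_or_gt (deriv w ψ₀) 0 with hp | hp
  · exact core_neg C₀ w hw2 hpos hle hR ψ₀ hψ₀ hp
  · set W : ℝ → ℝ := fun x => w (-x) with hW
    have hmaps : Set.MapsTo (fun x : ℝ => -x)
        (Set.Icc (-(π / 2)) (π / 2)) (Set.Icc (-(π / 2)) (π / 2)) := by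
      intro x hx
      constructor
      · linarith [hx.2]
      · linarith [hx.1]
    have hW2 : ContDiffOn ℝ 2 W (Set.Icc (-(π / 2)) (π / 2)) :=
      hw2.comp contDiff_neg.contDiffOn hmaps
    have hWpos : ∀ x ∈ Set.Icc (-(π / 2)) (π / 2), 0 < W x := fun x hx =>
      hpos (-x) (hmaps hx)
    have hWle : ∀ x ∈ Set.Icc (-(π / 2)) (π / 2), W x ≤ C₀ := fun x hx =>
      hle (-x) (hmaps hx)
    have hd1 : ∀ x : ℝ, deriv W x = -deriv w (-x) := fun x => deriv_comp_neg w x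
    have hd2 : ∀ x : ℝ, deriv (deriv W) x = deriv (deriv w) (-x) := by
      intro x
      have h : deriv W = fun y => -deriv w (-y) := funext hd1
      rw [h, deriv.fun_neg, deriv_comp_neg, neg_neg]
    have hWR : ∀ x ∈ Set.Ioo (-(π / 2)) (π / 2),
        0 < deriv (deriv W) x - Real.tan x * deriv W x - (deriv W x) ^ 2 / W x + 2 * W x ∧
        deriv (deriv W) x - Real.tan x * deriv W x - (deriv W x) ^ 2 / W x + 2 * W x ≤ C₀ := by
      intro x hx
      have hx' : -x ∈ Set.Ioo (-(π / 2)) (π / 2) := ⟨by linarith [hx.2], by linarith [hx.1]⟩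
      have h := hR (-x) hx'
      rw [Real.tan_neg] at h
      rw [hd1, hd2]
      have hWx : W x = w (-x) := rfl
      rw [hWx]
      simp only [neg_mul, mul_neg, neg_sq, sub_neg_eq_add] at h ⊢
      exact h
    have hψ₀' : -ψ₀ ∈ Set.Ioo (-(π / 2)) (π / 2) := ⟨by linarith [hψ₀.2], by linarith [hψ₀.1]⟩
    have hp' : deriv W (-ψ₀) ≤ 0 := by
      rw [hd1, neg_neg]
      linarith
    have hcore := core_neg C₀ W hW2 hWpos hWle hWR (-ψ₀) hψ₀' hp'
    rw [hd1, neg_neg] at hcore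
    have hWψ : W (-ψ₀) = w ψ₀ := by simp [hW]
    rw [hWψ, neg_pow] at hcore
    simpa using hcore

/-- A priori second order estimates: for any ancient radial solution of the pressure
equation with `v ≤ C₀`, `0 < R ≤ C₀` and satisfying Hamilton's Harnack inequality,
the spherical Laplacian `Δ_{S²} v = v_ψψ - tan ψ · v_ψ` and the quantity `v_ψ²/v`
are bounded by a constant depending only on `C₀`. -/
theorem second_order_apriori_estimates :
    ∀ C₀ : ℝ, 0 < C₀ → ∃ C : ℝ,
      ∀ t₀ : ℝ, t₀ < 0 →
      ∀ v : ℝ → ℝ → ℝ,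
      -- positivity
      (∀ ψ ∈ Set.Icc (-(π / 2)) (π / 2), ∀ t ≤ t₀, 0 < v ψ t) →
      -- twice continuously differentiable in ψ up to the endpoints
      (∀ t ≤ t₀, ContDiffOn ℝ 2 (fun ψ => v ψ t) (Set.Icc (-(π / 2)) (π / 2))) →
      -- smoothness at the poles
      (∀ t ≤ t₀, dps v (-(π / 2)) t = 0 ∧ dps v (π / 2) t = 0) →
      -- continuously differentiable in t
      (∀ ψ ∈ Set.Icc (-(π / 2)) (π / 2), ContDiffOn ℝ 1 (fun s => v ψ s) (Set.Iic t₀)) →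
      -- the radial pressure equation
      (∀ ψ ∈ Set.Ioo (-(π / 2)) (π / 2), ∀ t ≤ t₀,
        dtime v ψ t =
          v ψ t * (dpsps v ψ t - Real.tan ψ * dps v ψ t)
            - (dps v ψ t) ^ 2 + 2 * (v ψ t) ^ 2) →
      -- (a): uniform bounds on v and on the scalar curvature R = v_t/v
      (∀ ψ ∈ Set.Icc (-(π / 2)) (π / 2), ∀ t ≤ t₀,
        v ψ t ≤ C₀ ∧ 0 < scurv v ψ t ∧ scurv v ψ t ≤ C₀) →
      -- (b): Hamilton's Harnack inequality
      (∀ ψ ∈ Set.Ioo (-(π / 2)) (π / 2), ∀ t ≤ t₀,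
        dpsps (scurv v) ψ t - Real.tan ψ * dps (scurv v) ψ t
            + (scurv v ψ t) ^ 2 / v ψ t
          ≥ (dps (scurv v) ψ t) ^ 2 / scurv v ψ t) →
      -- conclusion: uniform second order estimates
      (∀ ψ ∈ Set.Ioo (-(π / 2)) (π / 2), ∀ t ≤ t₀,
        |dpsps v ψ t - Real.tan ψ * dps v ψ t| ≤ C ∧
        (dps v ψ t) ^ 2 / v ψ t ≤ C) := by
  intro C₀ hC₀
  refine ⟨19 * C₀, ?_⟩
  intro t₀ ht₀ v hpos hC2 hpoles hC1 hPDE ha hb ψ hψ t ht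
  have hpos' : ∀ x ∈ Set.Icc (-(π / 2)) (π / 2), 0 < (fun s => v s t) x := fun x hx =>
    hpos x hx t ht
  have hle' : ∀ x ∈ Set.Icc (-(π / 2)) (π / 2), (fun s => v s t) x ≤ C₀ := fun x hx =>
    (ha x hx t ht).1
  have hscurv : ∀ x ∈ Set.Ioo (-(π / 2)) (π / 2), scurv v x t =
      deriv (deriv (fun s => v s t)) x - Real.tan x * deriv (fun s => v s t) x
        - (deriv (fun s => v s t) x) ^ 2 / v x t + 2 * v x t := by
    intro x hx
    have hPDE' := hPDE x hx t ht
    have hvx : v x t ≠ 0 := (hpos x (Set.Ioo_subset_Icc_self hx) t ht).ne'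
    simp only [scurv, dtime, dpsps, dps] at *
    rw [hPDE']
    field_simp
  have hR : ∀ x ∈ Set.Ioo (-(π / 2)) (π / 2),
      0 < deriv (deriv (fun s => v s t)) x - Real.tan x * deriv (fun s => v s t) x
          - (deriv (fun s => v s t) x) ^ 2 / (fun s => v s t) x + 2 * (fun s => v s t) x ∧
      deriv (deriv (fun s => v s t)) x - Real.tan x * deriv (fun s => v s t) x
          - (deriv (fun s => v s t) x) ^ 2 / (fun s => v s t) x + 2 * (fun s => v s t) x ≤ C₀ := by
    intro x hx
    have ha' := ha x (Set.Ioo_subset_Icc_self hx) t ht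
    have h := hscurv x hx
    simp only []
    rw [← h]
    exact ⟨ha'.2.1, ha'.2.2⟩
  have hF : (deriv (fun s => v s t) ψ) ^ 2 / v ψ t ≤ 16 * C₀ :=
    core_all C₀ (fun s => v s t) (hC2 t ht) hpos' hle' hR ψ hψ
  have hR' := hR ψ hψ
  have hvpos : 0 < v ψ t := hpos ψ (Set.Ioo_subset_Icc_self hψ) t ht
  have hvle : v ψ t ≤ C₀ := (ha ψ (Set.Ioo_subset_Icc_self hψ) t ht).1
  have hFnn : 0 ≤ (deriv (fun s => v s t) ψ) ^ 2 / v ψ t := by positivity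
  simp only [] at hR'
  constructor
  · simp only [dpsps, dps]
    rw [abs_le]
    constructor
    · linarith [hR'.1, hFnn, hvle, hC₀]
    · linarith [hR'.2, hF, hvpos, hC₀]
  · simp only [dps]
    linarith [hF, hC₀]
end

section
/- Let v: (-π/2, π/2) × ℝ → ℝ be twice continuously differentiable, 2π-periodic in the second variable θ. Suppose there are constants M, K ≥ 0 such that |∂_θ v(ψ,θ)| ≤ M for all (ψ,θ), and sec²(ψ)·|∂_θθ v(ψ,θ) + tan(ψ)·∂_θ v(ψ,θ)| ≤ K for all (ψ,θ). Then sec²(ψ)·|∂_θ v(ψ,θ)| ≤ max(K, 2M) for all (ψ,θ) ∈ (-π/2, π/2) × ℝ. -/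
open Real Set

/-- A continuous periodic function attains a global max and min, and at those points the
derivative vanishes; this yields a bound on `c * |w θ|` from a bound on `c * |w' + t·w|`
when `1 ≤ |t|`. -/
lemma aux_key (w : ℝ → ℝ) (hw : Differentiable ℝ w)
    (hp : Function.Periodic w (2 * π)) (c t K : ℝ) (hc : 0 ≤ c) (ht : 1 ≤ |t|)
    (hK : ∀ θ : ℝ, c * |deriv w θ + t * w θ| ≤ K) : ∀ θ : ℝ, c * |w θ| ≤ K := by
  have hTpos : (0:ℝ) < 2 * π := by positivity
  -- global max
  obtain ⟨a, _, ha⟩ := isCompact_Icc.exists_isMaxOn (s := Icc (0:ℝ) (2*π))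
    ⟨0, by constructor <;> [rfl; positivity]⟩ hw.continuous.continuousOn
  obtain ⟨b, _, hb⟩ := isCompact_Icc.exists_isMinOn (s := Icc (0:ℝ) (2*π))
    ⟨0, by constructor <;> [rfl; positivity]⟩ hw.continuous.continuousOn
  have hglob : ∀ x : ℝ, w b ≤ w x ∧ w x ≤ w a := by
    intro x
    obtain ⟨n, hn, -⟩ := existsUnique_add_zsmul_mem_Ico hTpos x 0
    have hx : w (x + n • (2*π)) = w x := by
      rw [zsmul_eq_mul]; exact (hp.int_mul n) x
    have hmem : x + n • (2*π) ∈ Icc (0:ℝ) (2*π) :=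
      Ico_subset_Icc_self (by simpa using hn)
    exact ⟨hx ▸ hb hmem, hx ▸ ha hmem⟩
  have hda : deriv w a = 0 := by
    have : IsLocalMax w a := Filter.Eventually.of_forall fun x => (hglob x).2
    exact this.deriv_eq_zero
  have hdb : deriv w b = 0 := by
    have : IsLocalMin w b := Filter.Eventually.of_forall fun x => (hglob x).1
    exact this.deriv_eq_zero
  have hKa : c * |w a| ≤ K := by
    have := hK a
    rw [hda, zero_add, abs_mul] at this
    calc c * |w a| ≤ c * (|t| * |w a|) :=
          mul_le_mul_of_nonneg_left (le_mul_of_one_le_left (abs_nonneg _) ht) hc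
      _ ≤ K := this
  have hKb : c * |w b| ≤ K := by
    have := hK b
    rw [hdb, zero_add, abs_mul] at this
    calc c * |w b| ≤ c * (|t| * |w b|) :=
          mul_le_mul_of_nonneg_left (le_mul_of_one_le_left (abs_nonneg _) ht) hc
      _ ≤ K := this
  intro θ
  obtain ⟨h1, h2⟩ := hglob θ
  rcases abs_cases (w θ) with ⟨he, -⟩ | ⟨he, -⟩
  · calc c * |w θ| = c * w θ := by rw [he]
      _ ≤ c * w a := by nlinarith
      _ ≤ c * |w a| := by nlinarith [le_abs_self (w a)]
      _ ≤ K := hKa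
  · calc c * |w θ| = c * (-w θ) := by rw [he]
      _ ≤ c * (-w b) := by nlinarith
      _ ≤ c * |w b| := by nlinarith [neg_le_abs (w b)]
      _ ≤ K := hKb

/-- Evaluation at the `θ`-maximum of `v_θ` on each fixed latitude: if `|v_θ| ≤ M` and
`sec²ψ·|v_θθ + tan ψ · v_θ| ≤ K` for a `2π`-periodic (in `θ`) twice continuously
differentiable function `v` on `(-π/2, π/2) × ℝ`, then `sec²ψ·|v_θ| ≤ max(K, 2M)`. -/
theorem sec_sq_vtheta_bound
    (v : ℝ → ℝ → ℝ)
    (hreg : ContDiffOn ℝ 2 (fun p : ℝ × ℝ => v p.1 p.2)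
      (Set.Ioo (-(π / 2)) (π / 2) ×ˢ (Set.univ : Set ℝ)))
    (hper : ∀ ψ θ : ℝ, v ψ (θ + 2 * π) = v ψ θ)
    (M K : ℝ) (hM : 0 ≤ M) (hK : 0 ≤ K)
    (h1 : ∀ ψ ∈ Set.Ioo (-(π / 2)) (π / 2), ∀ θ : ℝ,
      |deriv (fun s => v ψ s) θ| ≤ M)
    (h2 : ∀ ψ ∈ Set.Ioo (-(π / 2)) (π / 2), ∀ θ : ℝ,
      (1 / Real.cos ψ) ^ 2 *
          |deriv (deriv (fun s => v ψ s)) θ + Real.tan ψ * deriv (fun s => v ψ s) θ| ≤ K) :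
    ∀ ψ ∈ Set.Ioo (-(π / 2)) (π / 2), ∀ θ : ℝ,
      (1 / Real.cos ψ) ^ 2 * |deriv (fun s => v ψ s) θ| ≤ max K (2 * M) := by
  intro ψ hψ θ
  have hcos : 0 < Real.cos ψ := Real.cos_pos_of_mem_Ioo hψ
  -- the slice is C²
  have hslice : ContDiff ℝ 2 (fun s => v ψ s) := by
    rw [contDiff_iff_contDiffAt]
    intro s
    have hopen : IsOpen (Set.Ioo (-(π / 2)) (π / 2) ×ˢ (Set.univ : Set ℝ)) :=
      isOpen_Ioo.prod isOpen_univ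
    have hmem : (ψ, s) ∈ Set.Ioo (-(π / 2)) (π / 2) ×ˢ (Set.univ : Set ℝ) :=
      ⟨hψ, mem_univ s⟩
    have hF : ContDiffAt ℝ 2 (fun p : ℝ × ℝ => v p.1 p.2) (ψ, s) :=
      hreg.contDiffAt (hopen.mem_nhds hmem)
    exact hF.comp s ((ContDiffAt.prodMk contDiffAt_const contDiffAt_id) : ContDiffAt ℝ 2 (fun s : ℝ => (ψ, s)) s)
  set w : ℝ → ℝ := deriv (fun s => v ψ s) with hw
  have hwC1 : ContDiff ℝ 1 w := (contDiff_succ_iff_deriv.mp (by exact_mod_cast hslice)).2.2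
  have hwd : Differentiable ℝ w := hwC1.differentiable one_ne_zero
  have hpv : Function.Periodic (fun s => v ψ s) (2 * π) := fun x => hper ψ x
  have hpw : Function.Periodic w (2 * π) := by
    intro x
    have : (fun s => v ψ (s + 2 * π)) = fun s => v ψ s := funext fun s => hper ψ s
    calc w (x + 2 * π) = deriv (fun s => v ψ (s + 2 * π)) x := by
          rw [deriv_comp_add_const]
      _ = w x := by rw [this]
  rcases le_or_gt ((1 / Real.cos ψ) ^ 2) 2 with hle | hgt
  · -- sec² ≤ 2 case
    have := h1 ψ hψ θ
    have hsq : 0 ≤ (1 / Real.cos ψ) ^ 2 := sq_nonneg _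
    have : (1 / Real.cos ψ) ^ 2 * |w θ| ≤ 2 * M := by
      nlinarith [abs_nonneg (w θ)]
    exact this.trans (le_max_right _ _)
  · -- sec² > 2, so |tan ψ| ≥ 1
    have hsin : Real.sin ψ ^ 2 + Real.cos ψ ^ 2 = 1 := Real.sin_sq_add_cos_sq ψ
    have hcos2 : Real.cos ψ ^ 2 < 1 / 2 := by
      have h2' : 2 * Real.cos ψ ^ 2 < 1 := by
        have hne : Real.cos ψ ≠ 0 := ne_of_gt hcos
        have := hgt
        rw [div_pow, one_pow] at this
        have hcsq : 0 < Real.cos ψ ^ 2 := by positivity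
        calc 2 * Real.cos ψ ^ 2 < (1 / Real.cos ψ ^ 2) * Real.cos ψ ^ 2 := by
              exact mul_lt_mul_of_pos_right this hcsq
          _ = 1 := by field_simp
      linarith
    have htan : 1 ≤ |Real.tan ψ| := by
      rw [Real.tan_eq_sin_div_cos, abs_div]
      rw [le_div_iff₀ (by rwa [abs_of_pos hcos])]
      have h1' : Real.cos ψ ^ 2 ≤ Real.sin ψ ^ 2 := by nlinarith
      have : |Real.cos ψ| ≤ |Real.sin ψ| := by
        rw [← Real.sqrt_sq_eq_abs, ← Real.sqrt_sq_eq_abs]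
        exact Real.sqrt_le_sqrt h1'
      simpa using this
    have := aux_key w hwd hpw ((1 / Real.cos ψ) ^ 2) (Real.tan ψ) K
      (sq_nonneg _) htan (fun θ' => h2 ψ hψ θ') θ
    exact this.trans (le_max_left _ _)
end

section
/- Let I ⊆ ℝ be an interval and let v: [-π/2, π/2] × I → ℝ be positive, twice continuously differentiable in ψ up to the endpoints with ∂_ψ v(±π/2, t) = 0 for every t ∈ I, differentiable in t, and satisfy the radial pressure equation ∂_t v = v·(∂_ψψ v - tan(ψ)·∂_ψ v) - (∂_ψ v)² + 2v² on (-π/2, π/2) × I. Assume the scalar curvature R := (∂_t v)/v is nonnegative. Then for every t ∈ I, J(t) := ∫_{-π/2}^{π/2} ((∂_ψ v)²/v - 4v)·cos ψ dψ ≤ 0. -/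
open Real Set intervalIntegral MeasureTheory

/-- Along a radial solution of the pressure equation with nonnegative scalar curvature
`R = v_t/v`, the Lyapunov functional `J(t) = ∫_{-π/2}^{π/2} (v_ψ²/v - 4v)·cos ψ dψ`
is nonpositive. -/
theorem lyapunov_nonpositive
    (I : Set ℝ) (hI : I.OrdConnected)
    (v : ℝ → ℝ → ℝ)
    (hpos : ∀ ψ ∈ Set.Icc (-(π / 2)) (π / 2), ∀ t ∈ I, 0 < v ψ t)
    (hψreg : ∀ t ∈ I, ContDiffOn ℝ 2 (fun ψ => v ψ t) (Set.Icc (-(π / 2)) (π / 2)))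
    (hpole : ∀ t ∈ I, dps v (-(π / 2)) t = 0 ∧ dps v (π / 2) t = 0)
    (htreg : ∀ ψ ∈ Set.Icc (-(π / 2)) (π / 2), ∀ t ∈ I,
      DifferentiableAt ℝ (fun s => v ψ s) t)
    (hpde : ∀ ψ ∈ Set.Ioo (-(π / 2)) (π / 2), ∀ t ∈ I,
      dtime v ψ t =
        v ψ t * (dpsps v ψ t - Real.tan ψ * dps v ψ t)
          - (dps v ψ t) ^ 2 + 2 * (v ψ t) ^ 2)
    (hR : ∀ ψ ∈ Set.Icc (-(π / 2)) (π / 2), ∀ t ∈ I, 0 ≤ dtime v ψ t / v ψ t) :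
    ∀ t ∈ I,
      (∫ ψ in (-(π / 2))..(π / 2), ((dps v ψ t) ^ 2 / v ψ t - 4 * v ψ t) * Real.cos ψ)
        ≤ 0 := by
  intro t ht
  set a : ℝ := -(π / 2) with ha
  set b : ℝ := π / 2 with hb
  have hab : a < b := by
    have := Real.pi_pos; rw [ha, hb]; linarith
  have hca : Real.cos a = 0 := by rw [ha, Real.cos_neg, Real.cos_pi_div_two]
  have hcb : Real.cos b = 0 := by rw [hb, Real.cos_pi_div_two]
  set u : ℝ → ℝ := fun ψ => v ψ t with hu_def
  have hu : ContDiffOn ℝ 2 u (Icc a b) := hψreg t ht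
  have hud : UniqueDiffOn ℝ (Icc a b) := uniqueDiffOn_Icc hab
  set u1 : ℝ → ℝ := fun ψ => derivWithin u (Icc a b) ψ with hu1_def
  set u2 : ℝ → ℝ := fun ψ => derivWithin u1 (Icc a b) ψ with hu2_def
  have hu1cd : ContDiffOn ℝ 1 u1 (Icc a b) := hu.derivWithin hud (by norm_num)
  have hu1cont : ContinuousOn u1 (Icc a b) := hu1cd.continuousOn
  have hu2cont : ContinuousOn u2 (Icc a b) :=
    hu1cd.continuousOn_derivWithin hud le_rfl
  have hucont : ContinuousOn u (Icc a b) := hu.continuousOn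
  have hune : ∀ ψ ∈ Icc a b, u ψ ≠ 0 := fun ψ hψ => (hpos ψ hψ t ht).ne'
  -- interior identification of derivatives
  have hu1eq : ∀ ψ ∈ Ioo a b, u1 ψ = dps v ψ t := by
    intro ψ hψ
    exact derivWithin_of_mem_nhds (Icc_mem_nhds hψ.1 hψ.2)
  have hEqIoo : Set.EqOn u1 (deriv u) (Ioo a b) := fun ψ hψ =>
    derivWithin_of_mem_nhds (Icc_mem_nhds hψ.1 hψ.2)
  have hu1has : ∀ ψ ∈ Ioo a b, HasDerivAt u1 (u2 ψ) ψ := by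
    intro ψ hψ
    have hev : u1 =ᶠ[nhds ψ] deriv u :=
      Filter.eventuallyEq_of_mem (isOpen_Ioo.mem_nhds hψ) hEqIoo
    have hdu : ContDiffOn ℝ 1 (deriv u) (Ioo a b) :=
      (hu.mono Ioo_subset_Icc_self).deriv_of_isOpen isOpen_Ioo (by norm_num)
    have hdiff : DifferentiableAt ℝ (deriv u) ψ :=
      (hdu.contDiffAt (isOpen_Ioo.mem_nhds hψ)).differentiableAt one_ne_zero
    have h1 : HasDerivAt (deriv u) (deriv (deriv u) ψ) ψ := hdiff.hasDerivAt
    have h2 : u2 ψ = deriv (deriv u) ψ := by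
      show derivWithin u1 (Icc a b) ψ = deriv (deriv u) ψ
      rw [derivWithin_of_mem_nhds (Icc_mem_nhds hψ.1 hψ.2)]
      exact hev.deriv_eq
    rw [h2]
    exact h1.congr_of_eventuallyEq hev
  have hu2eq : ∀ ψ ∈ Ioo a b, u2 ψ = dpsps v ψ t := by
    intro ψ hψ
    have hev : u1 =ᶠ[nhds ψ] deriv u :=
      Filter.eventuallyEq_of_mem (isOpen_Ioo.mem_nhds hψ) hEqIoo
    show derivWithin u1 (Icc a b) ψ = dpsps v ψ t
    rw [derivWithin_of_mem_nhds (Icc_mem_nhds hψ.1 hψ.2)]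
    exact hev.deriv_eq
  -- the auxiliary functions
  set F : ℝ → ℝ := fun ψ => u1 ψ * Real.cos ψ with hF_def
  set F' : ℝ → ℝ := fun ψ => u2 ψ * Real.cos ψ - u1 ψ * Real.sin ψ with hF'_def
  set H : ℝ → ℝ := fun ψ => ((u1 ψ) ^ 2 / u ψ - 4 * u ψ) * Real.cos ψ with hH_def
  have hFcont : ContinuousOn F (Icc a b) :=
    hu1cont.mul Real.continuous_cos.continuousOn
  have hF'cont : ContinuousOn F' (Icc a b) :=
    (hu2cont.mul Real.continuous_cos.continuousOn).sub
      (hu1cont.mul Real.continuous_sin.continuousOn)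
  have hHcont : ContinuousOn H (Icc a b) :=
    (((hu1cont.pow 2).div hucont hune).sub
      (continuousOn_const.mul hucont)).mul Real.continuous_cos.continuousOn
  have hF'int : IntervalIntegrable F' volume a b :=
    hF'cont.intervalIntegrable_of_Icc hab.le
  have hHint : IntervalIntegrable H volume a b :=
    hHcont.intervalIntegrable_of_Icc hab.le
  have hFderiv : ∀ ψ ∈ Ioo a b, HasDerivAt F (F' ψ) ψ := by
    intro ψ hψ
    have h := (hu1has ψ hψ).mul (Real.hasDerivAt_cos ψ)
    have he : F' ψ = u2 ψ * Real.cos ψ + u1 ψ * -Real.sin ψ := by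
      show u2 ψ * Real.cos ψ - u1 ψ * Real.sin ψ = _; ring
    rw [he]
    exact h
  -- FTC: ∫ F' = F b - F a = 0
  have hFTC : (∫ ψ in a..b, F' ψ) = 0 := by
    rw [intervalIntegral.integral_eq_sub_of_hasDeriv_right_of_le hab.le hFcont
      (fun ψ hψ => (hFderiv ψ hψ).hasDerivWithinAt) hF'int]
    simp [hF_def, hca, hcb]
  -- pointwise inequality H ≤ F' on the open interval
  have hkey : ∀ ψ ∈ Ioo a b, H ψ ≤ F' ψ := by
    intro ψ hψ
    have hψI : ψ ∈ Icc a b := Ioo_subset_Icc_self hψ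
    have hv : 0 < v ψ t := hpos ψ hψI t ht
    have hc : 0 < Real.cos ψ := Real.cos_pos_of_mem_Ioo hψ
    have hdt : 0 ≤ dtime v ψ t := by
      have h := hR ψ hψI t ht
      rwa [le_div_iff₀ hv, zero_mul] at h
    have hpde' := hpde ψ hψ t ht
    rw [← hu1eq ψ hψ, ← hu2eq ψ hψ, Real.tan_eq_sin_div_cos] at hpde'
    rw [hpde'] at hdt
    have h1 : 0 ≤ (v ψ t * (u2 ψ - Real.sin ψ / Real.cos ψ * u1 ψ) - u1 ψ ^ 2
        + 2 * v ψ t ^ 2) * Real.cos ψ := mul_nonneg hdt hc.le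
    have hexp : (v ψ t * (u2 ψ - Real.sin ψ / Real.cos ψ * u1 ψ) - u1 ψ ^ 2
        + 2 * v ψ t ^ 2) * Real.cos ψ
        = v ψ t * u2 ψ * Real.cos ψ - v ψ t * u1 ψ * Real.sin ψ
          - u1 ψ ^ 2 * Real.cos ψ + 2 * v ψ t ^ 2 * Real.cos ψ := by
      field_simp
    rw [hexp] at h1
    have huv : u ψ = v ψ t := rfl
    rw [hH_def, hF'_def]
    simp only [huv]
    have hme : (u1 ψ ^ 2 / v ψ t - 4 * v ψ t) * Real.cos ψ
        = ((u1 ψ ^ 2 - 4 * v ψ t ^ 2) * Real.cos ψ) / v ψ t := by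
      have h0 : u1 ψ ^ 2 / v ψ t - 4 * v ψ t
          = (u1 ψ ^ 2 - 4 * v ψ t ^ 2) / v ψ t := by
        rw [eq_div_iff hv.ne', sub_mul, div_mul_cancel₀ _ hv.ne']
        ring
      rw [h0, div_mul_eq_mul_div]
    rw [hme, div_le_iff₀ hv]
    nlinarith [mul_nonneg (mul_nonneg (sq_nonneg (v ψ t)) hc.le) (by norm_num : (0:ℝ) ≤ 2)]
  -- compare the integrand with H
  have hIeq : Set.EqOn (fun ψ => ((dps v ψ t) ^ 2 / v ψ t - 4 * v ψ t) * Real.cos ψ)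
      H (Set.uIcc a b) := by
    rw [Set.uIcc_of_le hab.le]
    intro ψ hψ
    rcases eq_or_lt_of_le hψ.1 with h | h
    · simp [hH_def, ← h, hca]
    rcases eq_or_lt_of_le hψ.2 with h' | h'
    · simp [hH_def, h', hcb]
    · have : ψ ∈ Ioo a b := ⟨h, h'⟩
      simp only [hH_def, hu1eq ψ this]
      rfl
  rw [intervalIntegral.integral_congr hIeq]
  have hmono : (∫ ψ in a..b, H ψ) ≤ ∫ ψ in a..b, F' ψ := by
    apply intervalIntegral.integral_mono_ae_restrict hab.le hHint hF'int
    rw [← Measure.restrict_congr_set Ioo_ae_eq_Icc]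
    exact Filter.Eventually.mono (ae_restrict_mem measurableSet_Ioo)
      fun ψ hψ => hkey ψ hψ
  linarith [hFTC ▸ hmono]
end

section
/- Let t₀ < 0 and let I: (-∞, t₀] → ℝ be differentiable with 0 < I(t) ≤ 1 for all t ≤ t₀, I'(t) ≥ I(t)·(1 - I(t)²)/(-t) for all t ≤ t₀, and I(t₀) < 1. Then there exist constants C₁ > 0 and C₂ > 0 such that I(t) ≤ C₁/((-t) + C₂) for all t ≤ t₀. -/
open Real Set

/-- Decay of Hamilton's isoperimetric ratio: if `0 < I ≤ 1`,
`I' ≥ I(1 - I²)/(-t)` on `(-∞, t₀]` with `t₀ < 0`, and `I(t₀) < 1`, then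
`I(t) ≤ C₁/((-t) + C₂)` for all `t ≤ t₀`. -/
theorem isoperimetric_ratio_decay
    (t₀ : ℝ) (ht₀ : t₀ < 0) (I : ℝ → ℝ)
    (hdiff : ∀ t ≤ t₀, DifferentiableAt ℝ I t)
    (hbound : ∀ t ≤ t₀, 0 < I t ∧ I t ≤ 1)
    (hode : ∀ t ≤ t₀, deriv I t ≥ I t * (1 - (I t) ^ 2) / (-t))
    (hlt : I t₀ < 1) :
    ∃ C₁ > (0 : ℝ), ∃ C₂ > (0 : ℝ), ∀ t ≤ t₀, I t ≤ C₁ / ((-t) + C₂) := by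
  set F : ℝ → ℝ := fun t => ((I t ^ 2)⁻¹ - 1) * (t ^ 2)⁻¹ with hF
  have hder : ∀ t ≤ t₀, HasDerivAt F
      ((-((2:ℝ) * I t ^ 1 * deriv I t) / (I t ^ 2) ^ 2) * (t ^ 2)⁻¹
        + ((I t ^ 2)⁻¹ - 1) * (-((2:ℝ) * t ^ 1) / (t ^ 2) ^ 2)) t := by
    intro t htle
    have hu := (hbound t htle).1
    have htne : t ≠ 0 := by intro h; rw [h] at htle; linarith
    have hune : I t ^ 2 ≠ 0 := by positivity
    have ht2ne : t ^ 2 ≠ 0 := pow_ne_zero 2 htne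
    have h1 : HasDerivAt I (deriv I t) t := (hdiff t htle).hasDerivAt
    have h2 := ((h1.pow 2).inv hune).sub_const 1
    have h3 := (hasDerivAt_pow 2 t).inv ht2ne
    have h4 := h2.mul h3
    convert h4 using 1
    · rfl
    · rfl
    · rfl
    · simp [Pi.pow_apply, Pi.inv_apply]
  have hcont : ContinuousOn F (Iic t₀) := fun t ht =>
    ((hder t ht).differentiableAt).continuousAt.continuousWithinAt
  have hdiffF : DifferentiableOn ℝ F (interior (Iic t₀)) := by
    rw [interior_Iic]
    exact fun t ht => ((hder t ht.le).differentiableAt).differentiableWithinAt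
  have hnonpos : ∀ t ∈ interior (Iic t₀), deriv F t ≤ 0 := by
    rw [interior_Iic]
    intro t ht
    rw [(hder t ht.le).deriv]
    have htle : t ≤ t₀ := ht.le
    obtain ⟨hu, hu1⟩ := hbound t htle
    have htneg : t < 0 := lt_trans ht ht₀
    have htne : t ≠ 0 := ne_of_lt htneg
    have hune : I t ≠ 0 := ne_of_gt hu
    have hmt : (0:ℝ) < -t := by linarith
    have hodet := hode t htle
    rw [ge_iff_le, div_le_iff₀ hmt] at hodet
    have hs : deriv I t * t + I t * (1 - I t ^ 2) ≤ 0 := by nlinarith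
    have hE : (-((2:ℝ) * I t ^ 1 * deriv I t) / (I t ^ 2) ^ 2) * (t ^ 2)⁻¹
        + ((I t ^ 2)⁻¹ - 1) * (-((2:ℝ) * t ^ 1) / (t ^ 2) ^ 2)
        = (-2 / (I t ^ 3 * t ^ 3)) * (deriv I t * t + I t * (1 - I t ^ 2)) := by
      field_simp
      ring
    rw [hE]
    have hpos : (0:ℝ) ≤ -2 / (I t ^ 3 * t ^ 3) := by
      apply le_of_lt
      apply div_pos_of_neg_of_neg (by norm_num)
      have ht3 : t ^ 3 < 0 := by
        have h := mul_neg_of_neg_of_pos htneg (show (0:ℝ) < t ^ 2 by positivity)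
        nlinarith [h]
      exact mul_neg_of_pos_of_neg (pow_pos hu 3) ht3
    exact mul_nonpos_of_nonneg_of_nonpos hpos hs
  have hanti : AntitoneOn F (Iic t₀) :=
    antitoneOn_of_deriv_nonpos (convex_Iic t₀) hcont hdiffF hnonpos
  obtain ⟨hu0, hu01⟩ := hbound t₀ le_rfl
  set c : ℝ := F t₀ with hc_def
  have hc : 0 < c := by
    have h1 : 1 < (I t₀ ^ 2)⁻¹ := by
      rw [lt_inv_comm₀ (by norm_num) (by positivity)]
      nlinarith
    have ht₀ne : t₀ ≠ 0 := ne_of_lt ht₀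
    have h2 : (0:ℝ) < (t₀ ^ 2)⁻¹ := by positivity
    have : c = ((I t₀ ^ 2)⁻¹ - 1) * (t₀ ^ 2)⁻¹ := rfl
    rw [this]
    exact mul_pos (by linarith) h2
  have h1c : c * (1 / c) = 1 := mul_one_div_cancel (ne_of_gt hc)
  have hM : (0:ℝ) < 2 + 2 / c := by
    have h2c : (0:ℝ) < 2 / c := div_pos two_pos hc
    linarith
  refine ⟨Real.sqrt (2 + 2 / c), Real.sqrt_pos.mpr hM, 1, one_pos, ?_⟩
  intro t htle
  obtain ⟨hu, hu1⟩ := hbound t htle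
  have htneg : t < 0 := lt_of_le_of_lt htle ht₀
  have htne : t ≠ 0 := ne_of_lt htneg
  have ht2pos : (0:ℝ) < t ^ 2 := by positivity
  have hFt : c ≤ F t := hanti htle (le_refl t₀ : t₀ ∈ Iic t₀) htle
  have key : I t ^ 2 * (c * t ^ 2 + 1) ≤ 1 := by
    have hFt' : c ≤ ((I t ^ 2)⁻¹ - 1) * (t ^ 2)⁻¹ := hFt
    rw [← div_eq_mul_inv, le_div_iff₀ ht2pos] at hFt'
    have h2 : c * t ^ 2 + 1 ≤ (I t ^ 2)⁻¹ := by linarith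
    have h3 := mul_le_mul_of_nonneg_left h2 (sq_nonneg (I t))
    have h4 : I t ^ 2 * (I t ^ 2)⁻¹ = 1 := mul_inv_cancel₀ (by positivity)
    calc I t ^ 2 * (c * t ^ 2 + 1) ≤ I t ^ 2 * (I t ^ 2)⁻¹ := by
          simpa [sq] using h3
      _ = 1 := h4
  have hden : (0:ℝ) < -t + 1 := by linarith
  rw [div_eq_mul_inv, ← div_eq_mul_inv, le_div_iff₀ hden]
  have hu2 : I t ^ 2 ≤ 1 := by nlinarith
  have hmain : c * (I t * (-t + 1)) ^ 2 ≤ 2 * c + 2 := by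
    nlinarith [key, mul_nonneg (mul_nonneg hc.le (sq_nonneg (I t))) (sq_nonneg (1 + t)),
      mul_le_mul_of_nonneg_left hu2 hc.le, hu2, hc.le]
  have hsq : (I t * (-t + 1)) ^ 2 ≤ 2 + 2 / c := by
    have heq : 2 + 2 / c = (2 * c + 2) / c := by field_simp
    rw [heq, le_div_iff₀ hc]
    linarith [hmain]
  calc I t * (-t + 1) ≤ Real.sqrt ((I t * (-t + 1)) ^ 2) := by
        rw [Real.sqrt_sq (by positivity)]
    _ ≤ Real.sqrt (2 + 2 / c) := Real.sqrt_le_sqrt hsq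
end

section
/- Let f: ℝ² → ℝ be twice continuously differentiable with ∂_xx f + ∂_yy f = 0 everywhere (f is harmonic), 2π-periodic in the second variable (f(x, y + 2π) = f(x, y) for all (x,y)), and of at most linear growth: there exist A, B ≥ 0 such that |f(x,y)| ≤ A + B·|x| for all (x,y). Then there exist constants c₁, c₂ ∈ ℝ such that f(x,y) = c₁ + c₂·x for all (x,y) ∈ ℝ². -/
open Real Set MeasureTheory intervalIntegral


lemma hasDerivAt_integral_param
    {u u' : ℝ → ℝ → ℝ} {b : ℝ}
    (hu : Continuous fun p : ℝ × ℝ => u p.1 p.2)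
    (hu' : Continuous fun p : ℝ × ℝ => u' p.1 p.2)
    (hd : ∀ x y, HasDerivAt (fun s => u s y) (u' x y) x) (x₀ : ℝ) :
    HasDerivAt (fun x => ∫ y in (0:ℝ)..b, u x y) (∫ y in (0:ℝ)..b, u' x₀ y) x₀ := by
  have hK : IsCompact ((Icc (x₀-1) (x₀+1)) ×ˢ (uIcc (0:ℝ) b)) :=
    isCompact_Icc.prod isCompact_uIcc
  have hne : ((x₀, 0) : ℝ × ℝ) ∈ (Icc (x₀-1) (x₀+1)) ×ˢ (uIcc (0:ℝ) b) :=
    ⟨⟨by linarith, by linarith⟩, left_mem_uIcc⟩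
  obtain ⟨z, hz, hmax⟩ := hK.exists_isMaxOn ⟨_, hne⟩
    ((continuous_abs.comp hu').continuousOn)
  set M := |u' z.1 z.2| with hM
  refine (intervalIntegral.hasDerivAt_integral_of_dominated_loc_of_deriv_le
    (F := u) (F' := u') (bound := fun _ => M) (s := Metric.ball x₀ 1) (Metric.ball_mem_nhds x₀ one_pos) ?_ ?_ ?_ ?_ ?_ ?_).2
  · exact Filter.Eventually.of_forall fun x =>
      ((hu.comp (Continuous.prodMk_right x)).aestronglyMeasurable)
  · exact (hu.comp (Continuous.prodMk_right x₀)).intervalIntegrable 0 b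
  · exact (hu'.comp (Continuous.prodMk_right x₀)).aestronglyMeasurable
  · refine Filter.Eventually.of_forall fun t ht x hx => ?_
    have hxI : x ∈ Icc (x₀-1) (x₀+1) := by
      have := mem_ball_iff_norm.mp hx
      rw [Real.norm_eq_abs, abs_sub_lt_iff] at this
      constructor <;> linarith [this.1, this.2]
    have := hmax (show ((x,t) : ℝ × ℝ) ∈ (Icc (x₀-1) (x₀+1)) ×ˢ (uIcc (0:ℝ) b) from ⟨hxI, uIoc_subset_uIcc ht⟩)
    simpa [Real.norm_eq_abs] using this
  · exact intervalIntegrable_const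
  · exact Filter.Eventually.of_forall fun t _ x _ => hd x t


lemma exp_ge_cube {t : ℝ} (ht : 0 ≤ t) : t ^ 3 / 27 ≤ Real.exp t := by
  have h1 : (0:ℝ) ≤ 1 + t / 3 := by linarith
  have h2 : t / 3 ≤ 1 + t / 3 := by linarith
  have h3 : (t / 3) ^ 3 ≤ (1 + t / 3) ^ 3 := pow_le_pow_left₀ (by linarith) h2 3
  have h4 : 1 + t / 3 ≤ Real.exp (t / 3) := by
    have := Real.add_one_le_exp (t / 3); linarith
  have h5 : (1 + t / 3) ^ 3 ≤ (Real.exp (t / 3)) ^ 3 := pow_le_pow_left₀ h1 h4 3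
  have h6 : (Real.exp (t / 3)) ^ 3 = Real.exp t := by
    rw [← Real.exp_nat_mul]; congr 1; push_cast; ring
  calc t ^ 3 / 27 = (t / 3) ^ 3 := by ring
    _ ≤ (1 + t / 3) ^ 3 := h3
    _ ≤ Real.exp t := h6 ▸ h5

lemma ode_aux_right (φ φ1 φ2 : ℝ → ℝ)
    (hd1 : ∀ x, HasDerivAt φ (φ1 x) x)
    (hd2 : ∀ x, HasDerivAt φ1 (φ2 x) x)
    (hpos : ∀ x, 0 ≤ φ x)
    {c : ℝ} (hc : 0 < c) (hle : ∀ x, c * φ x ≤ φ2 x)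
    {C : ℝ} (hgr : ∀ x, φ x ≤ C * (1 + x ^ 2))
    (x₀ : ℝ) (h0 : 0 ≤ φ1 x₀) : φ x₀ ≤ 0 := by
  by_contra hcon
  push_neg at hcon
  have hC : 0 ≤ C := by
    have h := (hpos 0).trans (hgr 0); nlinarith
  obtain ⟨k, hk, hk2⟩ : ∃ k : ℝ, 0 < k ∧ k ^ 2 = c :=
    ⟨Real.sqrt c, Real.sqrt_pos.mpr hc, Real.sq_sqrt hc.le⟩
  have hmono1 : Monotone φ1 := by
    apply monotone_of_deriv_nonneg (fun x => (hd2 x).differentiableAt)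
    intro x
    rw [(hd2 x).deriv]
    exact le_trans (mul_nonneg hc.le (hpos x)) (hle x)
  have hdψ : ∀ x, HasDerivAt (fun x => φ1 x + k * φ x) (φ2 x + k * φ1 x) x :=
    fun x => (hd2 x).add ((hd1 x).const_mul k)
  have hdχ : ∀ x, HasDerivAt (fun x => Real.exp (-(k * x)) * (φ1 x + k * φ x))
      (Real.exp (-(k * x)) * (φ2 x + k * φ1 x)
        + (Real.exp (-(k * x)) * (-k)) * (φ1 x + k * φ x)) x := by
    intro x
    have h1 : HasDerivAt (fun x : ℝ => -(k * x)) (-k) x := by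
      have := ((hasDerivAt_id' x).const_mul k).neg; rwa [mul_one] at this
    have he : HasDerivAt (fun x => Real.exp (-(k * x))) (Real.exp (-(k * x)) * (-k)) x :=
      (Real.hasDerivAt_exp _).comp x h1
    have h2 := he.mul (hdψ x)
    exact h2.congr_deriv (by ring)
  have hmonoχ : Monotone (fun x => Real.exp (-(k * x)) * (φ1 x + k * φ x)) := by
    apply monotone_of_deriv_nonneg (fun x => (hdχ x).differentiableAt)
    intro x
    rw [(hdχ x).deriv]
    have heq : Real.exp (-(k * x)) * (φ2 x + k * φ1 x)
        + (Real.exp (-(k * x)) * (-k)) * (φ1 x + k * φ x)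
        = Real.exp (-(k * x)) * (φ2 x - k ^ 2 * φ x) := by ring
    rw [heq, hk2]
    exact mul_nonneg (Real.exp_nonneg _) (by linarith [hle x])
  have hψlow : ∀ t : ℝ, 0 ≤ t →
      k * φ x₀ * Real.exp (k * t) ≤ φ1 (x₀ + t) + k * φ (x₀ + t) := by
    intro t ht
    have hχle := hmonoχ (by linarith : x₀ ≤ x₀ + t)
    simp only at hχle
    have hψ0 : k * φ x₀ ≤ φ1 x₀ + k * φ x₀ := by linarith [h0]
    have h1 : Real.exp (-(k * x₀)) * (k * φ x₀)
        ≤ Real.exp (-(k * (x₀ + t))) * (φ1 (x₀ + t) + k * φ (x₀ + t)) :=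
      (mul_le_mul_of_nonneg_left hψ0 (Real.exp_nonneg _)).trans hχle
    have e3 : Real.exp (k * (x₀ + t)) * Real.exp (-(k * (x₀ + t))) = 1 := by
      rw [← Real.exp_add]; simp
    have e4 : Real.exp (k * (x₀ + t)) * Real.exp (-(k * x₀)) = Real.exp (k * t) := by
      rw [← Real.exp_add]; congr 1; ring
    have h2 := mul_le_mul_of_nonneg_left h1 (Real.exp_nonneg (k * (x₀ + t)))
    calc k * φ x₀ * Real.exp (k * t)
        = Real.exp (k * (x₀ + t)) * Real.exp (-(k * x₀)) * (k * φ x₀) := by rw [e4]; ring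
      _ ≤ Real.exp (k * (x₀ + t)) * (Real.exp (-(k * (x₀ + t)))
            * (φ1 (x₀ + t) + k * φ (x₀ + t))) := by rw [mul_assoc]; exact h2
      _ = φ1 (x₀ + t) + k * φ (x₀ + t) := by rw [← mul_assoc, e3, one_mul]
  have hφ1le : ∀ x, φ1 x ≤ C * (1 + (x + 1) ^ 2) := by
    intro x
    obtain ⟨ξ, hξ, hval⟩ := exists_hasDerivAt_eq_slope φ φ1 (by linarith : x < x + 1)
      (fun t _ => (hd1 t).continuousAt.continuousWithinAt) (fun t _ => hd1 t)
    have hm : φ1 x ≤ φ1 ξ := hmono1 hξ.1.le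
    rw [hval] at hm
    have h1 : φ (x + 1) ≤ C * (1 + (x + 1) ^ 2) := hgr (x + 1)
    have h2 : 0 ≤ φ x := hpos x
    have h3 : (φ (x + 1) - φ x) / (x + 1 - x) = φ (x + 1) - φ x := by norm_num
    rw [h3] at hm
    linarith
  have ha : 0 < k * φ x₀ := mul_pos hk hcon
  have hcomb : ∀ t : ℝ, |x₀| + 1 ≤ t →
      (k * φ x₀) * (k * t) ^ 3 / 27 ≤ 5 * (C + k * C) * t ^ 2 := by
    intro t htR
    have habs1 : -|x₀| ≤ x₀ := neg_abs_le x₀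
    have habs2 : x₀ ≤ |x₀| := le_abs_self x₀
    have habs0 : 0 ≤ |x₀| := abs_nonneg x₀
    have ht1 : (1:ℝ) ≤ t := by linarith
    have ht0 : (0:ℝ) ≤ t := by linarith
    have hone : (1:ℝ) ≤ t ^ 2 := by nlinarith
    have hx1 : (x₀ + t + 1) ^ 2 ≤ 4 * t ^ 2 := by
      have e1 : 0 ≤ 2 * t - (x₀ + t + 1) := by linarith
      have e2 : 0 ≤ 2 * t + (x₀ + t + 1) := by linarith
      nlinarith [mul_nonneg e1 e2]
    have hx2 : (x₀ + t) ^ 2 ≤ 4 * t ^ 2 := by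
      have e1 : 0 ≤ 2 * t - (x₀ + t) := by linarith
      have e2 : 0 ≤ 2 * t + (x₀ + t) := by linarith
      nlinarith [mul_nonneg e1 e2]
    have s1 : C * (1 + (x₀ + t + 1) ^ 2) ≤ C * (1 + 4 * t ^ 2) :=
      mul_le_mul_of_nonneg_left (by linarith) hC
    have s2 : k * (C * (1 + (x₀ + t) ^ 2)) ≤ k * (C * (1 + 4 * t ^ 2)) :=
      mul_le_mul_of_nonneg_left (mul_le_mul_of_nonneg_left (by linarith) hC) hk.le
    have hkC : 0 ≤ k * C := mul_nonneg hk.le hC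
    have s3 : (C + k * C) * (1 + 4 * t ^ 2) ≤ (C + k * C) * (5 * t ^ 2) :=
      mul_le_mul_of_nonneg_left (by linarith) (by linarith)
    have hup : φ1 (x₀ + t) + k * φ (x₀ + t)
        ≤ C * (1 + (x₀ + t + 1) ^ 2) + k * (C * (1 + (x₀ + t) ^ 2)) := by
      have h4 := hφ1le (x₀ + t)
      have h5 := mul_le_mul_of_nonneg_left (hgr (x₀ + t)) hk.le
      linarith
    have hlow := hψlow t ht0
    have hexp := exp_ge_cube (t := k * t) (by positivity)
    have h3 : (k * φ x₀) * ((k * t) ^ 3 / 27) ≤ (k * φ x₀) * Real.exp (k * t) :=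
      mul_le_mul_of_nonneg_left hexp ha.le
    calc (k * φ x₀) * (k * t) ^ 3 / 27 = (k * φ x₀) * ((k * t) ^ 3 / 27) := by ring
      _ ≤ (k * φ x₀) * Real.exp (k * t) := h3
      _ ≤ φ1 (x₀ + t) + k * φ (x₀ + t) := hlow
      _ ≤ C * (1 + (x₀ + t + 1) ^ 2) + k * (C * (1 + (x₀ + t) ^ 2)) := hup
      _ ≤ 5 * (C + k * C) * t ^ 2 := by linarith
  -- deduce a linear bound
  have hak : 0 < (k * φ x₀) * k ^ 3 := by positivity
  have hq : ∀ t : ℝ, |x₀| + 1 ≤ t → (k * φ x₀) * k ^ 3 * t ≤ 135 * (C + k * C) := by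
    intro t h1
    have ht1 : (1:ℝ) ≤ t := by have := abs_nonneg x₀; linarith
    have ht2 : (0:ℝ) < t ^ 2 := by positivity
    have h3 := hcomb t h1
    have h4 : (k * φ x₀) * k ^ 3 * t ^ 3 ≤ 135 * (C + k * C) * t ^ 2 := by
      have e : (k * φ x₀) * (k * t) ^ 3 = (k * φ x₀) * k ^ 3 * t ^ 3 := by ring
      rw [e] at h3; linarith
    have e2 : (k * φ x₀) * k ^ 3 * t ^ 3 = ((k * φ x₀) * k ^ 3 * t) * t ^ 2 := by ring
    rw [e2] at h4
    exact le_of_mul_le_mul_right h4 ht2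
  -- contradiction with explicit choice of t
  have hD : 0 < 135 * (C + k * C) + 1 := by
    have hkC : 0 ≤ k * C := mul_nonneg hk.le hC
    linarith
  have hqt := hq (|x₀| + 1 + (135 * (C + k * C) + 1) / ((k * φ x₀) * k ^ 3))
    (by
      have h7 : 0 ≤ (135 * (C + k * C) + 1) / ((k * φ x₀) * k ^ 3) := by positivity
      linarith)
  have hbig : 135 * (C + k * C) + 1
      ≤ (k * φ x₀) * k ^ 3 * (|x₀| + 1 + (135 * (C + k * C) + 1) / ((k * φ x₀) * k ^ 3)) := by
    have e : (k * φ x₀) * k ^ 3 * ((135 * (C + k * C) + 1) / ((k * φ x₀) * k ^ 3))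
        = 135 * (C + k * C) + 1 := by
      field_simp
    have h5 : 0 ≤ (k * φ x₀) * k ^ 3 * (|x₀| + 1) := by positivity
    calc 135 * (C + k * C) + 1
        = (k * φ x₀) * k ^ 3 * ((135 * (C + k * C) + 1) / ((k * φ x₀) * k ^ 3)) := e.symm
      _ ≤ (k * φ x₀) * k ^ 3 * (|x₀| + 1)
          + (k * φ x₀) * k ^ 3 * ((135 * (C + k * C) + 1) / ((k * φ x₀) * k ^ 3)) := by linarith
      _ = _ := by ring
  linarith

lemma ode_zero (φ φ1 φ2 : ℝ → ℝ)
    (hd1 : ∀ x, HasDerivAt φ (φ1 x) x)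
    (hd2 : ∀ x, HasDerivAt φ1 (φ2 x) x)
    (hpos : ∀ x, 0 ≤ φ x)
    {c : ℝ} (hc : 0 < c) (hle : ∀ x, c * φ x ≤ φ2 x)
    {C : ℝ} (hgr : ∀ x, φ x ≤ C * (1 + x ^ 2)) :
    ∀ x, φ x = 0 := by
  intro x
  rcases le_or_gt 0 (φ1 x) with h | h
  · exact le_antisymm (ode_aux_right φ φ1 φ2 hd1 hd2 hpos hc hle hgr x h) (hpos x)
  · have key : φ (-(-x)) ≤ 0 := by
      apply ode_aux_right (fun s => φ (-s)) (fun s => -φ1 (-s)) (fun s => φ2 (-s))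
      · intro s
        have := (hd1 (-s)).comp s (hasDerivAt_neg s)
        rw [mul_neg_one] at this; exact this
      · intro s
        have := ((hd2 (-s)).neg).comp s (hasDerivAt_neg s)
        rw [neg_mul_neg, mul_one] at this; exact this
      · intro s; exact hpos _
      · exact hc
      · intro s; exact hle _
      · intro s; simpa using hgr (-s)
      · simp only [neg_neg]; linarith
    simp only [neg_neg] at key
    exact le_antisymm key (hpos x)


lemma pd1 {F : ℝ × ℝ → ℝ} (hF : Differentiable ℝ F) (x y : ℝ) :
    HasDerivAt (fun s => F (s, y)) (fderiv ℝ F (x, y) (1, 0)) x :=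
  (hF (x, y)).hasFDerivAt.comp_hasDerivAt x
    ((hasDerivAt_id x).prodMk (hasDerivAt_const x y))

lemma pd2 {F : ℝ × ℝ → ℝ} (hF : Differentiable ℝ F) (x y : ℝ) :
    HasDerivAt (fun s => F (x, s)) (fderiv ℝ F (x, y) (0, 1)) y :=
  (hF (x, y)).hasFDerivAt.comp_hasDerivAt y
    ((hasDerivAt_const y x).prodMk (hasDerivAt_id y))

lemma exists_partials (f : ℝ → ℝ → ℝ)
    (hreg : ContDiff ℝ 2 (fun p : ℝ × ℝ => f p.1 p.2)) :
    ∃ g1 g2 h11 h22 : ℝ → ℝ → ℝ,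
      Continuous (fun p : ℝ × ℝ => g1 p.1 p.2) ∧
      Continuous (fun p : ℝ × ℝ => g2 p.1 p.2) ∧
      Continuous (fun p : ℝ × ℝ => h11 p.1 p.2) ∧
      Continuous (fun p : ℝ × ℝ => h22 p.1 p.2) ∧
      (∀ x y, HasDerivAt (fun s => f s y) (g1 x y) x) ∧
      (∀ x y, HasDerivAt (fun s => f x s) (g2 x y) y) ∧
      (∀ x y, HasDerivAt (fun s => g1 s y) (h11 x y) x) ∧
      (∀ x y, HasDerivAt (fun s => g2 x s) (h22 x y) y) := by
  have hFd : Differentiable ℝ (fun p : ℝ × ℝ => f p.1 p.2) :=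
    hreg.differentiable (by norm_num)
  have hfd1 : ContDiff ℝ 1 (fderiv ℝ (fun p : ℝ × ℝ => f p.1 p.2)) :=
    hreg.fderiv_right (by norm_num)
  have hG1c : ContDiff ℝ 1 (fun p : ℝ × ℝ => fderiv ℝ (fun p : ℝ × ℝ => f p.1 p.2) p (1, 0)) :=
    hfd1.clm_apply contDiff_const
  have hG2c : ContDiff ℝ 1 (fun p : ℝ × ℝ => fderiv ℝ (fun p : ℝ × ℝ => f p.1 p.2) p (0, 1)) :=
    hfd1.clm_apply contDiff_const
  refine ⟨fun x y => fderiv ℝ (fun p : ℝ × ℝ => f p.1 p.2) (x, y) (1, 0),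
    fun x y => fderiv ℝ (fun p : ℝ × ℝ => f p.1 p.2) (x, y) (0, 1),
    fun x y => fderiv ℝ (fun p : ℝ × ℝ =>
      fderiv ℝ (fun q : ℝ × ℝ => f q.1 q.2) p (1, 0)) (x, y) (1, 0),
    fun x y => fderiv ℝ (fun p : ℝ × ℝ =>
      fderiv ℝ (fun q : ℝ × ℝ => f q.1 q.2) p (0, 1)) (x, y) (0, 1),
    ?_, ?_, ?_, ?_, ?_, ?_, ?_, ?_⟩
  · exact hG1c.continuous
  · exact hG2c.continuous
  · exact (hG1c.continuous_fderiv one_ne_zero).clm_apply continuous_const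
  · exact (hG2c.continuous_fderiv one_ne_zero).clm_apply continuous_const
  · exact fun x y => pd1 hFd x y
  · exact fun x y => pd2 hFd x y
  · exact fun x y => pd1 (hG1c.differentiable one_ne_zero) x y
  · exact fun x y => pd2 (hG2c.differentiable one_ne_zero) x y

lemma main_aux (h g1 g2 h11 h22 : ℝ → ℝ → ℝ)
    (hch : Continuous fun p : ℝ × ℝ => h p.1 p.2)
    (hc1 : Continuous fun p : ℝ × ℝ => g1 p.1 p.2)
    (hc2 : Continuous fun p : ℝ × ℝ => g2 p.1 p.2)
    (hc3 : Continuous fun p : ℝ × ℝ => h11 p.1 p.2)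
    (hc4 : Continuous fun p : ℝ × ℝ => h22 p.1 p.2)
    (hd1 : ∀ x y, HasDerivAt (fun s => h s y) (g1 x y) x)
    (hd2 : ∀ x y, HasDerivAt (fun s => h x s) (g2 x y) y)
    (hd3 : ∀ x y, HasDerivAt (fun s => g1 s y) (h11 x y) x)
    (hd4 : ∀ x y, HasDerivAt (fun s => g2 x s) (h22 x y) y)
    (hlap : ∀ x y, h11 x y + h22 x y = 0)
    (hper : ∀ x y, h x (y + 2 * π) = h x y)
    (hper2 : ∀ x y, g2 x (y + 2 * π) = g2 x y)
    (hmean : ∀ x, (∫ y in (0:ℝ)..(2 * π), h x y) = 0)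
    (C : ℝ) (hgr : ∀ x y, (h x y) ^ 2 ≤ C * (1 + x ^ 2)) :
    ∀ x y, h x y = 0 := by
  have hπ : (0:ℝ) < 2 * π := by positivity
  -- slice continuity
  have ch : ∀ x, Continuous (fun y => h x y) := fun x => hch.comp (Continuous.prodMk_right x)
  have cg1 : ∀ x, Continuous (fun y => g1 x y) := fun x => hc1.comp (Continuous.prodMk_right x)
  have cg2 : ∀ x, Continuous (fun y => g2 x y) := fun x => hc2.comp (Continuous.prodMk_right x)
  have ch11 : ∀ x, Continuous (fun y => h11 x y) := fun x => hc3.comp (Continuous.prodMk_right x)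
  have ch22 : ∀ x, Continuous (fun y => h22 x y) := fun x => hc4.comp (Continuous.prodMk_right x)
  -- derivative of φ
  have hdφ : ∀ x, HasDerivAt (fun x => ∫ y in (0:ℝ)..(2 * π), (h x y) ^ 2)
      (∫ y in (0:ℝ)..(2 * π), 2 * h x y * g1 x y) x := by
    intro x
    apply hasDerivAt_integral_param (u := fun x y => (h x y) ^ 2)
      (u' := fun x y => 2 * h x y * g1 x y)
    · exact hch.pow 2
    · exact (continuous_const.mul hch).mul hc1
    · intro x y
      have h2 := (hd1 x y).pow 2
      have e : ((2:ℕ):ℝ) * h x y ^ (2 - 1) * g1 x y = 2 * h x y * g1 x y := by norm_num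
      rw [e] at h2
      exact h2
  have hdφ1 : ∀ x, HasDerivAt (fun x => ∫ y in (0:ℝ)..(2 * π), 2 * h x y * g1 x y)
      (∫ y in (0:ℝ)..(2 * π), (2 * (g1 x y * g1 x y) + 2 * h x y * h11 x y)) x := by
    intro x
    apply hasDerivAt_integral_param
      (u' := fun x y => 2 * (g1 x y * g1 x y) + 2 * h x y * h11 x y)
    · exact (continuous_const.mul hch).mul hc1
    · exact (continuous_const.mul (hc1.mul hc1)).add ((continuous_const.mul hch).mul hc3)
    · intro x y
      have h2 := ((hd1 x y).const_mul 2).mul (hd3 x y)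
      exact h2.congr_deriv (by ring)
  -- the differential inequality
  have hle : ∀ x, (1 / (2 * π ^ 2)) * (∫ y in (0:ℝ)..(2 * π), (h x y) ^ 2)
      ≤ ∫ y in (0:ℝ)..(2 * π), (2 * (g1 x y * g1 x y) + 2 * h x y * h11 x y) := by
    intro x
    set J := ∫ y in (0:ℝ)..(2 * π), g2 x y * g2 x y with hJdef
    have hJ0 : 0 ≤ J := integral_nonneg hπ.le (fun y _ => mul_self_nonneg _)
    -- integration by parts
    have hparts : (∫ y in (0:ℝ)..(2 * π), (g2 x y * g2 x y + h x y * h22 x y))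
        = h x (2 * π) * g2 x (2 * π) - h x 0 * g2 x 0 :=
      integral_eq_sub_of_hasDerivAt (fun y _ => (hd2 x y).mul (hd4 x y))
        ((((cg2 x).mul (cg2 x)).add ((ch x).mul (ch22 x))).intervalIntegrable _ _)
    have hper0 : h x (2 * π) = h x 0 := by have := hper x 0; rwa [zero_add] at this
    have hper20 : g2 x (2 * π) = g2 x 0 := by have := hper2 x 0; rwa [zero_add] at this
    have hparts0 : (∫ y in (0:ℝ)..(2 * π), (g2 x y * g2 x y + h x y * h22 x y)) = 0 := by
      rw [hparts, hper0, hper20]; ring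
    have hint1 : IntervalIntegrable (fun y => g2 x y * g2 x y) volume 0 (2 * π) :=
      ((cg2 x).mul (cg2 x)).intervalIntegrable _ _
    have hint2 : IntervalIntegrable (fun y => h x y * h22 x y) volume 0 (2 * π) :=
      ((ch x).mul (ch22 x)).intervalIntegrable _ _
    have hsum : J + (∫ y in (0:ℝ)..(2 * π), h x y * h22 x y) = 0 := by
      rw [hJdef, ← integral_add hint1 hint2]; exact hparts0
    have hHJ : (∫ y in (0:ℝ)..(2 * π), h x y * h11 x y) = J := by
      have hcongr : (∫ y in (0:ℝ)..(2 * π), h x y * h11 x y)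
          = ∫ y in (0:ℝ)..(2 * π), -(h x y * h22 x y) := by
        apply integral_congr
        intro y _
        show h x y * h11 x y = -(h x y * h22 x y)
        have e : h11 x y = -h22 x y := by linarith [hlap x y]
        rw [e]; ring
      rw [hcongr, intervalIntegral.integral_neg]
      linarith
    -- Poincaré inequality
    set I := ∫ y in (0:ℝ)..(2 * π), |g2 x y| with hIdef
    have hI0 : 0 ≤ I := integral_nonneg hπ.le (fun y _ => abs_nonneg _)
    have hIint : IntervalIntegrable (fun y => |g2 x y|) volume 0 (2 * π) :=
      (cg2 x).abs.intervalIntegrable _ _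
    have hbound : ∀ y ∈ Icc (0:ℝ) (2 * π), |h x y| ≤ I := by
      intro y hy
      have hdiff : ∀ z : ℝ, h x y - h x z = ∫ t in z..y, g2 x t := by
        intro z
        have e := integral_eq_sub_of_hasDerivAt (f := fun t => h x t)
          (f' := fun t => g2 x t) (a := z) (b := y) (fun t _ => hd2 x t)
          ((cg2 x).intervalIntegrable z y)
        linarith [e]
      have habs : ∀ z ∈ Icc (0:ℝ) (2 * π), |h x y - h x z| ≤ I := by
        intro z hz
        rw [hdiff z]
        have key : ∀ a b : ℝ, a ∈ Icc (0:ℝ) (2 * π) → b ∈ Icc (0:ℝ) (2 * π) → a ≤ b →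
            |∫ t in a..b, g2 x t| ≤ I := by
          intro a b hai hbi hab
          have h1 : |∫ t in a..b, g2 x t| ≤ ∫ t in a..b, |g2 x t| :=
            abs_integral_le_integral_abs hab
          have h2 : (∫ t in a..b, |g2 x t|) ≤ I := by
            rw [hIdef]
            exact integral_mono_interval hai.1 hab hbi.2
              (Filter.Eventually.of_forall fun t => abs_nonneg _) hIint
          linarith
        rcases le_total z y with hzy | hyz
        · exact key z y hz hy hzy
        · have e : (∫ t in z..y, g2 x t) = -(∫ t in y..z, g2 x t) :=
            integral_symm y z
          rw [e, abs_neg]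
          exact key y z hy hz hyz
      have hsub : (2 * π) * h x y = ∫ z in (0:ℝ)..(2 * π), (h x y - h x z) := by
        rw [integral_sub intervalIntegrable_const ((ch x).intervalIntegrable _ _),
          intervalIntegral.integral_const, hmean x]
        simp [smul_eq_mul]
      have habs2 : ‖(2 * π) * h x y‖ ≤ I * |2 * π - 0| := by
        rw [hsub]
        apply intervalIntegral.norm_integral_le_of_norm_le_const
        intro z hz
        have hz' : z ∈ Icc (0:ℝ) (2 * π) := by
          have : z ∈ Ioc (0:ℝ) (2 * π) := by rwa [uIoc_of_le hπ.le] at hz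
          exact Ioc_subset_Icc_self this
        simpa [Real.norm_eq_abs] using habs z hz'
      rw [Real.norm_eq_abs, abs_mul, abs_of_pos hπ] at habs2
      have e0 : |2 * π - 0| = 2 * π := by rw [sub_zero, abs_of_pos hπ]
      rw [e0] at habs2
      have := habs2
      nlinarith [abs_nonneg (h x y)]
    have hsq : (∫ y in (0:ℝ)..(2 * π), (h x y) ^ 2) ≤ (2 * π) * I ^ 2 := by
      have hmono : (∫ y in (0:ℝ)..(2 * π), (h x y) ^ 2)
          ≤ ∫ _ in (0:ℝ)..(2 * π), I ^ 2 :=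
        integral_mono_on hπ.le (((ch x).pow 2).intervalIntegrable _ _)
          intervalIntegrable_const
          (fun y hy => by nlinarith [hbound y hy, abs_nonneg (h x y), sq_abs (h x y)])
      rw [intervalIntegral.integral_const, sub_zero, smul_eq_mul] at hmono
      exact hmono
    have hCS : I ^ 2 ≤ (2 * π) * J := by
      have hexp : (0:ℝ) ≤ ∫ y in (0:ℝ)..(2 * π), (|g2 x y| - I / (2 * π)) ^ 2 :=
        integral_nonneg hπ.le (fun _ _ => sq_nonneg _)
      have hexpand : (∫ y in (0:ℝ)..(2 * π), (|g2 x y| - I / (2 * π)) ^ 2)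
          = J - (2 * (I / (2 * π))) * I + (2 * π) * (I / (2 * π)) ^ 2 := by
        have e : ∀ y : ℝ, (|g2 x y| - I / (2 * π)) ^ 2
            = g2 x y * g2 x y - (2 * (I / (2 * π))) * |g2 x y| + (I / (2 * π)) ^ 2 := by
          intro y
          have e1 : |g2 x y| ^ 2 = g2 x y * g2 x y := by rw [sq_abs]; ring
          calc (|g2 x y| - I / (2 * π)) ^ 2
              = |g2 x y| ^ 2 - (2 * (I / (2 * π))) * |g2 x y| + (I / (2 * π)) ^ 2 := by ring
            _ = g2 x y * g2 x y - (2 * (I / (2 * π))) * |g2 x y| + (I / (2 * π)) ^ 2 := by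
                rw [e1]
        rw [integral_congr (g := fun y => g2 x y * g2 x y
          - (2 * (I / (2 * π))) * |g2 x y| + (I / (2 * π)) ^ 2) (fun y _ => e y)]
        rw [integral_add (hint1.sub (hIint.const_mul _)) intervalIntegrable_const,
          integral_sub hint1 (hIint.const_mul _), intervalIntegral.integral_const_mul, intervalIntegral.integral_const]
        rw [← hJdef, ← hIdef, sub_zero, smul_eq_mul]
      rw [hexpand] at hexp
      have e2 : (2 * (I / (2 * π))) * I = I ^ 2 / π := by field_simp
      have e3 : (2 * π) * (I / (2 * π)) ^ 2 = I ^ 2 / (2 * π) := by field_simp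
      rw [e2, e3] at hexp
      have e4 : I ^ 2 / π - I ^ 2 / (2 * π) = I ^ 2 / (2 * π) := by field_simp; ring
      have h5 : I ^ 2 / (2 * π) ≤ J := by linarith
      calc I ^ 2 = (I ^ 2 / (2 * π)) * (2 * π) := by field_simp
        _ ≤ J * (2 * π) := mul_le_mul_of_nonneg_right h5 hπ.le
        _ = (2 * π) * J := by ring
    -- assemble
    have hEint : IntervalIntegrable (fun y => 2 * (g1 x y * g1 x y)) volume 0 (2 * π) :=
      (continuous_const.mul ((cg1 x).mul (cg1 x))).intervalIntegrable _ _
    have hHint : IntervalIntegrable (fun y => 2 * h x y * h11 x y) volume 0 (2 * π) :=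
      ((continuous_const.mul (ch x)).mul (ch11 x)).intervalIntegrable _ _
    have hsplit2 : (∫ y in (0:ℝ)..(2 * π), (2 * (g1 x y * g1 x y) + 2 * h x y * h11 x y))
        = (∫ y in (0:ℝ)..(2 * π), 2 * (g1 x y * g1 x y))
          + ∫ y in (0:ℝ)..(2 * π), 2 * h x y * h11 x y :=
      integral_add hEint hHint
    have hE0 : 0 ≤ ∫ y in (0:ℝ)..(2 * π), 2 * (g1 x y * g1 x y) :=
      integral_nonneg hπ.le (fun y _ => mul_nonneg (by norm_num) (mul_self_nonneg _))
    have h2J : (∫ y in (0:ℝ)..(2 * π), 2 * h x y * h11 x y) = 2 * J := by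
      have hcongr : (∫ y in (0:ℝ)..(2 * π), 2 * h x y * h11 x y)
          = ∫ y in (0:ℝ)..(2 * π), 2 * (h x y * h11 x y) :=
        integral_congr (fun y _ => by show 2 * h x y * h11 x y = 2 * (h x y * h11 x y); ring)
      rw [hcongr, intervalIntegral.integral_const_mul, hHJ]
    have hchain : (∫ y in (0:ℝ)..(2 * π), (h x y) ^ 2) ≤ (2 * π) * ((2 * π) * J) := by
      calc (∫ y in (0:ℝ)..(2 * π), (h x y) ^ 2) ≤ (2 * π) * I ^ 2 := hsq
        _ ≤ (2 * π) * ((2 * π) * J) := mul_le_mul_of_nonneg_left hCS hπ.le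
    have hπ2 : (0:ℝ) < 2 * π ^ 2 := by positivity
    have hgoal : (1 / (2 * π ^ 2)) * (∫ y in (0:ℝ)..(2 * π), (h x y) ^ 2) ≤ 2 * J := by
      have step := mul_le_mul_of_nonneg_left hchain (le_of_lt (by positivity :
        (0:ℝ) < 1 / (2 * π ^ 2)))
      have e5 : (1 / (2 * π ^ 2)) * ((2 * π) * ((2 * π) * J)) = 2 * J := by
        field_simp
      linarith [e5 ▸ step]
    rw [hsplit2, h2J]
    linarith
  -- growth and positivity of φ
  have hposφ : ∀ x, 0 ≤ ∫ y in (0:ℝ)..(2 * π), (h x y) ^ 2 :=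
    fun x => integral_nonneg hπ.le (fun y _ => sq_nonneg _)
  have hgrφ : ∀ x, (∫ y in (0:ℝ)..(2 * π), (h x y) ^ 2) ≤ (2 * π * C) * (1 + x ^ 2) := by
    intro x
    have hmono : (∫ y in (0:ℝ)..(2 * π), (h x y) ^ 2)
        ≤ ∫ _ in (0:ℝ)..(2 * π), C * (1 + x ^ 2) :=
      integral_mono_on hπ.le (((ch x).pow 2).intervalIntegrable _ _)
        intervalIntegrable_const (fun y _ => hgr x y)
    rw [intervalIntegral.integral_const, sub_zero, smul_eq_mul] at hmono
    linarith [hmono]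
  -- conclude φ ≡ 0
  have hzero := ode_zero (fun x => ∫ y in (0:ℝ)..(2 * π), (h x y) ^ 2)
    (fun x => ∫ y in (0:ℝ)..(2 * π), 2 * h x y * g1 x y)
    (fun x => ∫ y in (0:ℝ)..(2 * π), (2 * (g1 x y * g1 x y) + 2 * h x y * h11 x y))
    hdφ hdφ1 hposφ (by positivity : (0:ℝ) < 1 / (2 * π ^ 2)) hle hgrφ
  -- conclude h ≡ 0
  intro x y
  have hzx : (∫ y in (0:ℝ)..(2 * π), (h x y) ^ 2) = 0 := hzero x
  have hzero_on : ∀ z ∈ Icc (0:ℝ) (2 * π), h x z = 0 := by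
    intro z hz
    by_contra hne
    have habs : 0 < |h x z| := abs_pos.mpr hne
    have hpos' : 0 < ∫ y in (0:ℝ)..(2 * π), (h x y) ^ 2 :=
      intervalIntegral.integral_pos hπ (((ch x).pow 2).continuousOn)
        (fun w _ => sq_nonneg _) ⟨z, hz, by nlinarith [sq_abs (h x z)]⟩
    linarith
  obtain ⟨z, hz, he⟩ :=
    (show Function.Periodic (h x) (2 * π) from fun w => hper x w).exists_mem_Ico₀ hπ y
  rw [he]
  exact hzero_on z ⟨hz.1, hz.2.le⟩

/-- A `2π`-periodic (in the second variable) harmonic function on `ℝ²` with at most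
linear growth `|f(x,y)| ≤ A + B|x|` is of the form `f(x,y) = c₁ + c₂·x`. -/
theorem periodic_harmonic_linear_growth
    (f : ℝ → ℝ → ℝ)
    (hreg : ContDiff ℝ 2 (fun p : ℝ × ℝ => f p.1 p.2))
    (hharm : ∀ x y : ℝ,
      deriv (deriv (fun s => f s y)) x + deriv (deriv (fun s => f x s)) y = 0)
    (hper : ∀ x y : ℝ, f x (y + 2 * π) = f x y)
    (A B : ℝ) (hA : 0 ≤ A) (hB : 0 ≤ B)
    (hgrowth : ∀ x y : ℝ, |f x y| ≤ A + B * |x|) :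
    ∃ c₁ c₂ : ℝ, ∀ x y : ℝ, f x y = c₁ + c₂ * x := by
  have hπ : (0:ℝ) < 2 * π := by positivity
  obtain ⟨g1, g2, h11, h22, hc1, hc2, hc3, hc4, hd1, hd2, hd3, hd4⟩ :=
    exists_partials f hreg
  have hcf : Continuous (fun p : ℝ × ℝ => f p.1 p.2) := hreg.continuous
  -- Laplace equation in terms of h11, h22
  have hlap : ∀ x y, h11 x y + h22 x y = 0 := by
    intro x y
    have e1 : deriv (fun s => f s y) = fun x => g1 x y :=
      funext fun x => (hd1 x y).deriv
    have e2 : deriv (fun s => f x s) = fun y => g2 x y :=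
      funext fun y => (hd2 x y).deriv
    have e := hharm x y
    rw [e1, e2, (hd3 x y).deriv, (hd4 x y).deriv] at e
    exact e
  -- periodicity of g2
  have hg2per : ∀ x y, g2 x (y + 2 * π) = g2 x y := by
    intro x y
    have h1 : HasDerivAt (fun s => f x (s + 2 * π)) (g2 x (y + 2 * π)) y := by
      have := (hd2 x (y + 2 * π)).comp y ((hasDerivAt_id y).add_const (2 * π))
      rw [mul_one] at this; exact this
    have h2 : (fun s => f x (s + 2 * π)) = fun s => f x s := funext fun s => hper x s
    rw [h2] at h1
    exact h1.unique (hd2 x y)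
  -- the average of f is affine
  have hg' : ∀ x, HasDerivAt (fun x => ∫ y in (0:ℝ)..(2 * π), f x y)
      (∫ y in (0:ℝ)..(2 * π), g1 x y) x :=
    hasDerivAt_integral_param hcf hc1 hd1
  have hg1' : ∀ x, HasDerivAt (fun x => ∫ y in (0:ℝ)..(2 * π), g1 x y)
      (∫ y in (0:ℝ)..(2 * π), h11 x y) x :=
    hasDerivAt_integral_param hc1 hc3 hd3
  have hH11int0 : ∀ x, (∫ y in (0:ℝ)..(2 * π), h11 x y) = 0 := by
    intro x
    have hftc : (∫ y in (0:ℝ)..(2 * π), h22 x y) = g2 x (2 * π) - g2 x 0 :=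
      integral_eq_sub_of_hasDerivAt (fun y _ => hd4 x y)
        ((hc4.comp (Continuous.prodMk_right x)).intervalIntegrable 0 (2 * π))
    have hper20 : g2 x (2 * π) = g2 x 0 := by
      have := hg2per x 0; rwa [zero_add] at this
    have hcongr : (∫ y in (0:ℝ)..(2 * π), h11 x y)
        = ∫ y in (0:ℝ)..(2 * π), -(h22 x y) :=
      integral_congr (fun y _ => by
        show h11 x y = -(h22 x y); linarith [hlap x y])
    rw [hcongr, intervalIntegral.integral_neg, hftc, hper20]
    ring
  -- g1int is constant
  have hg1const : ∀ x, (∫ y in (0:ℝ)..(2 * π), g1 x y)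
      = ∫ y in (0:ℝ)..(2 * π), g1 0 y := by
    intro x
    exact is_const_of_deriv_eq_zero (fun x => (hg1' x).differentiableAt)
      (fun x => by rw [(hg1' x).deriv]; exact hH11int0 x) x 0
  -- g is affine
  have hgaffine : ∀ x, (∫ y in (0:ℝ)..(2 * π), f x y)
      = (∫ y in (0:ℝ)..(2 * π), f 0 y) + (∫ y in (0:ℝ)..(2 * π), g1 0 y) * x := by
    intro x
    have hderiv : ∀ x, HasDerivAt
        (fun x => (∫ y in (0:ℝ)..(2 * π), f x y) - (∫ y in (0:ℝ)..(2 * π), g1 0 y) * x)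
        ((∫ y in (0:ℝ)..(2 * π), g1 x y) - (∫ y in (0:ℝ)..(2 * π), g1 0 y)) x := by
      intro x
      exact (hg' x).sub (by simpa using
        (hasDerivAt_id x).const_mul (∫ y in (0:ℝ)..(2 * π), g1 0 y))
    have hconst := is_const_of_deriv_eq_zero
      (fun x => (hderiv x).differentiableAt)
      (fun x => by rw [(hderiv x).deriv, hg1const x]; ring) x 0
    simp only [mul_zero, sub_zero] at hconst
    linarith [hconst]
  -- define the constants
  set c₁ : ℝ := (∫ y in (0:ℝ)..(2 * π), f 0 y) / (2 * π) with hc₁def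
  set c₂ : ℝ := (∫ y in (0:ℝ)..(2 * π), g1 0 y) / (2 * π) with hc₂def
  refine ⟨c₁, c₂, ?_⟩
  -- apply main_aux to h := f - c₁ - c₂ x
  have hmean : ∀ x, (∫ y in (0:ℝ)..(2 * π), (f x y - (c₁ + c₂ * x))) = 0 := by
    intro x
    have hint : IntervalIntegrable (fun y => f x y) volume 0 (2 * π) :=
      (hcf.comp (Continuous.prodMk_right x)).intervalIntegrable _ _
    rw [integral_sub hint intervalIntegrable_const,
      intervalIntegral.integral_const, hgaffine x]
    rw [hc₁def, hc₂def]
    have hne : (2 * π) ≠ 0 := ne_of_gt hπ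
    simp only [sub_zero, smul_eq_mul]
    field_simp
    ring
  have hdh1 : ∀ x y, HasDerivAt (fun s => f s y - (c₁ + c₂ * s)) (g1 x y - c₂) x := by
    intro x y
    have hlin : HasDerivAt (fun s : ℝ => c₁ + c₂ * s) c₂ x := by
      have := (hasDerivAt_const x c₁).add ((hasDerivAt_id' x).const_mul c₂); rwa [zero_add, mul_one] at this
    exact (hd1 x y).sub hlin
  have hdh2 : ∀ x y, HasDerivAt (fun s => f x s - (c₁ + c₂ * x)) (g2 x y) y :=
    fun x y => (hd2 x y).sub_const _
  have hdh3 : ∀ x y, HasDerivAt (fun s => g1 s y - c₂) (h11 x y) x :=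
    fun x y => (hd3 x y).sub_const _
  have hgrh : ∀ x y, (f x y - (c₁ + c₂ * x)) ^ 2
      ≤ (2 * (A + |c₁|) ^ 2 + 2 * (B + |c₂|) ^ 2) * (1 + x ^ 2) := by
    intro x y
    have h1 : |f x y - (c₁ + c₂ * x)| ≤ (A + |c₁|) + (B + |c₂|) * |x| := by
      have h2 := hgrowth x y
      have h3 : |f x y - (c₁ + c₂ * x)| ≤ |f x y| + |c₁ + c₂ * x| := abs_sub _ _
      have h4 : |c₁ + c₂ * x| ≤ |c₁| + |c₂| * |x| := by
        calc |c₁ + c₂ * x| ≤ |c₁| + |c₂ * x| := abs_add_le _ _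
          _ = |c₁| + |c₂| * |x| := by rw [abs_mul]
      linarith
    have h5 : (f x y - (c₁ + c₂ * x)) ^ 2 ≤ ((A + |c₁|) + (B + |c₂|) * |x|) ^ 2 := by
      have h6 : 0 ≤ (A + |c₁|) + (B + |c₂|) * |x| :=
        le_trans (abs_nonneg _) h1
      nlinarith [sq_abs (f x y - (c₁ + c₂ * x)), abs_nonneg (f x y - (c₁ + c₂ * x))]
    have h7 : ((A + |c₁|) + (B + |c₂|) * |x|) ^ 2
        ≤ (2 * (A + |c₁|) ^ 2 + 2 * (B + |c₂|) ^ 2) * (1 + x ^ 2) := by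
      have ha' : 0 ≤ A + |c₁| := by positivity
      have hb' : 0 ≤ B + |c₂| := by positivity
      nlinarith [sq_abs x, abs_nonneg x, sq_nonneg ((A + |c₁|) - (B + |c₂|) * |x|),
        sq_nonneg ((A + |c₁|) * |x| - (B + |c₂|)), sq_nonneg (1 - |x|)]
    linarith
  have hzero := main_aux (fun x y => f x y - (c₁ + c₂ * x)) (fun x y => g1 x y - c₂)
    g2 h11 h22
    (hcf.sub (continuous_const.add (continuous_const.mul continuous_fst)))
    (hc1.sub continuous_const) hc2 hc3 hc4
    hdh1 hdh2 hdh3 hd4 hlap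
    (fun x y => by simp only [hper x y])
    hg2per hmean _ hgrh
  intro x y
  have hz := hzero x y
  linarith
end

section
/- Let t₀ ≤ -1, let c > 0, C_H > 0, C₀ > 0, x₀ ∈ ℝ, and let α ∈ (0,1). Set b := √(c(1-α)/2). Let w: ℝ × (-∞, t₀] → ℝ satisfy w(x,t) ≥ c for all (x,t), and let R: ℝ × (-∞, t₀] → ℝ be nonnegative. Define for each t the distance d_t(x₀, x) := |∫_{x₀}^{x} w(s,t)^{-1/2} ds|. Assume: (a) the Harnack-type inequality R(x,t) ≤ C_H · R(x₀, t/2) · exp(2·d_t(x₀,x)²/(-t)) holds for all x ∈ ℝ and all t ≤ t₀; and (b) R(x₀, t) ≤ C₀/(-t) for all t ≤ t₀. Then for all t ≤ 2t₀ and all x with |x - x₀| ≤ b·√((-t)·log(-t)), one has R(x,t) ≤ 2·C_H·C₀/(-t)^α. -/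
open Real Set

/-- Curvature decay on the expanding regions `S_τ = {|x - x₀| ≤ b√(τ log τ)}`,
`τ = -t`, `b = √(c(1-α)/2)`: from Hamilton's Harnack-type inequality and the
pointwise decay `R(x₀,t) ≤ C₀/(-t)`, one gets `R ≤ 2·C_H·C₀/(-t)^α` on `S_τ`. -/
theorem curvature_decay_on_S_tau
    (t₀ : ℝ) (ht₀ : t₀ ≤ -1)
    (c C_H C₀ x₀ α : ℝ)
    (hc : 0 < c) (hCH : 0 < C_H) (hC₀ : 0 < C₀) (hα : α ∈ Set.Ioo (0 : ℝ) 1)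
    (w R : ℝ → ℝ → ℝ)
    (hw : ∀ x : ℝ, ∀ t ≤ t₀, c ≤ w x t)
    (hR : ∀ x : ℝ, ∀ t ≤ t₀, 0 ≤ R x t)
    -- (a) the Harnack-type inequality, with `d_t(x₀,x) = |∫_{x₀}^x w(s,t)^{-1/2} ds|`
    (hHarnack : ∀ x : ℝ, ∀ t ≤ t₀,
      R x t ≤ C_H * R x₀ (t / 2) *
        Real.exp (2 * |∫ s in x₀..x, (Real.sqrt (w s t))⁻¹| ^ 2 / (-t)))
    -- (b) pointwise curvature decay at `x₀`
    (hdecay : ∀ t ≤ t₀, R x₀ t ≤ C₀ / (-t)) :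
    ∀ t ≤ 2 * t₀, ∀ x : ℝ,
      |x - x₀| ≤ Real.sqrt (c * (1 - α) / 2) * Real.sqrt ((-t) * Real.log (-t)) →
        R x t ≤ 2 * C_H * C₀ / (-t) ^ α := by
  obtain ⟨hα0, hα1⟩ := hα
  intro t ht x hx
  have ht0 : t ≤ t₀ := le_trans ht (by linarith)
  have hht2 : t / 2 ≤ t₀ := by linarith
  have hτ2 : (2 : ℝ) ≤ -t := by linarith
  have hτpos : (0 : ℝ) < -t := by linarith
  have hlog : 0 < Real.log (-t) := Real.log_pos (by linarith)
  have hcs : 0 < Real.sqrt c := Real.sqrt_pos.mpr hc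
  -- bound the distance integral
  have hd : |∫ s in x₀..x, (Real.sqrt (w s t))⁻¹| ≤ (Real.sqrt c)⁻¹ * |x - x₀| := by
    have := intervalIntegral.norm_integral_le_of_norm_le_const
      (a := x₀) (b := x) (C := (Real.sqrt c)⁻¹)
      (f := fun s => (Real.sqrt (w s t))⁻¹) ?_
    · simpa [Real.norm_eq_abs, abs_sub_comm] using this
    · intro s _
      have h1 : Real.sqrt c ≤ Real.sqrt (w s t) := Real.sqrt_le_sqrt (hw s t ht0)
      have h2 : (Real.sqrt (w s t))⁻¹ ≤ (Real.sqrt c)⁻¹ := inv_anti₀ hcs h1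
      rw [Real.norm_eq_abs, abs_inv, abs_of_nonneg (Real.sqrt_nonneg _)]
      exact h2
  -- square bound on |x - x₀|
  have hb2 : 0 ≤ c * (1 - α) / 2 := div_nonneg (mul_nonneg hc.le (by linarith)) (by norm_num)
  have hτl : 0 ≤ (-t) * Real.log (-t) := by positivity
  have hx2 : |x - x₀| ^ 2 ≤ (c * (1 - α) / 2) * ((-t) * Real.log (-t)) := by
    have hnn : 0 ≤ |x - x₀| := abs_nonneg _
    calc |x - x₀| ^ 2 ≤ (Real.sqrt (c * (1 - α) / 2) * Real.sqrt ((-t) * Real.log (-t))) ^ 2 :=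
          pow_le_pow_left₀ hnn hx 2
      _ = (c * (1 - α) / 2) * ((-t) * Real.log (-t)) := by
          rw [mul_pow, Real.sq_sqrt hb2, Real.sq_sqrt hτl]
  -- exponent bound
  have hexp : 2 * |∫ s in x₀..x, (Real.sqrt (w s t))⁻¹| ^ 2 / (-t) ≤ (1 - α) * Real.log (-t) := by
    have hdnn : 0 ≤ |∫ s in x₀..x, (Real.sqrt (w s t))⁻¹| := abs_nonneg _
    have hd2 : |∫ s in x₀..x, (Real.sqrt (w s t))⁻¹| ^ 2 ≤ ((Real.sqrt c)⁻¹ * |x - x₀|) ^ 2 :=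
      pow_le_pow_left₀ hdnn hd 2
    have hcsq : (Real.sqrt c) ^ 2 = c := Real.sq_sqrt hc.le
    have key : |∫ s in x₀..x, (Real.sqrt (w s t))⁻¹| ^ 2 ≤ |x - x₀| ^ 2 / c := by
      calc |∫ s in x₀..x, (Real.sqrt (w s t))⁻¹| ^ 2 ≤ ((Real.sqrt c)⁻¹ * |x - x₀|) ^ 2 := hd2
        _ = |x - x₀| ^ 2 / c := by
            rw [mul_pow, inv_pow, hcsq]; ring
    have key2 : |∫ s in x₀..x, (Real.sqrt (w s t))⁻¹| ^ 2 ≤ ((1 - α) / 2) * ((-t) * Real.log (-t)) := by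
      calc |∫ s in x₀..x, (Real.sqrt (w s t))⁻¹| ^ 2 ≤ |x - x₀| ^ 2 / c := key
        _ ≤ ((c * (1 - α) / 2) * ((-t) * Real.log (-t))) / c := by gcongr
        _ = ((1 - α) / 2) * ((-t) * Real.log (-t)) := by field_simp
    rw [div_le_iff₀ hτpos]
    nlinarith [key2]
  -- exp ≤ (-t)^(1-α)
  have hexp2 : Real.exp (2 * |∫ s in x₀..x, (Real.sqrt (w s t))⁻¹| ^ 2 / (-t))
      ≤ (-t) ^ (1 - α) := by
    rw [Real.rpow_def_of_pos hτpos]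
    exact Real.exp_le_exp.mpr (le_of_le_of_eq hexp (mul_comm _ _))
  -- Harnack + decay
  have h1 : R x t ≤ C_H * (C₀ / (-(t / 2))) * (-t) ^ (1 - α) := by
    have hH := hHarnack x t ht0
    have hRd := hdecay (t / 2) hht2
    have hRnn : 0 ≤ R x₀ (t / 2) := hR x₀ (t / 2) hht2
    have hexpnn : 0 ≤ Real.exp (2 * |∫ s in x₀..x, (Real.sqrt (w s t))⁻¹| ^ 2 / (-t)) :=
      (Real.exp_pos _).le
    calc R x t ≤ C_H * R x₀ (t / 2) *
          Real.exp (2 * |∫ s in x₀..x, (Real.sqrt (w s t))⁻¹| ^ 2 / (-t)) := hH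
      _ ≤ C_H * (C₀ / (-(t / 2))) * (-t) ^ (1 - α) := by
          apply mul_le_mul
          · exact mul_le_mul_of_nonneg_left hRd hCH.le
          · exact hexp2
          · exact hexpnn
          · exact mul_nonneg hCH.le (div_nonneg hC₀.le (by linarith))
  -- arithmetic
  have hfin : C_H * (C₀ / (-(t / 2))) * (-t) ^ (1 - α) = 2 * C_H * C₀ / (-t) ^ α := by
    have h : (-t) ^ (1 - α) = (-t) / (-t) ^ α := by
      rw [Real.rpow_sub hτpos, Real.rpow_one]
    rw [h]
    have hαpos : (0:ℝ) < (-t) ^ α := Real.rpow_pos_of_pos hτpos α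
    have htne : t ≠ 0 := by linarith
    field_simp
  linarith [h1, hfin.le]
end

section
/- Let x₀ ∈ ℝ, b > 0, C ≥ 1, and t₀ ≤ -e. Define ρ(t) := b·√((-t)·(log(-t) + 2·log C)/2) for t ≤ t₀, and let D := {(x,t) : t ≤ t₀, |x - x₀| ≤ ρ(t)}. Let a: D → ℝ satisfy 0 < a(x,t) ≤ b²/4 on D, and let F: D → ℝ be continuous, twice continuously differentiable in x and continuously differentiable in t on the interior of D, with 0 ≤ F(x,t) ≤ C on D and ∂_t F ≤ a·∂_xx F on the interior of D. Assume moreover that for every ε > 0 there exists t_ε ≤ t₀ such that F(x,t) ≤ ε whenever (x,t) ∈ D and t ≤ t_ε. Then F(x₀, t) ≤ (-t)^{-1/2} for all t ≤ t₀. -/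
open Real Set Filter Topology

/-- Second spatial derivative `∂_xx F`. -/
noncomputable def dXX (F : ℝ → ℝ → ℝ) (x t : ℝ) : ℝ := deriv (deriv (fun s => F s t)) x

/-- Time derivative `∂_t F`. -/
noncomputable def dT (F : ℝ → ℝ → ℝ) (x t : ℝ) : ℝ := deriv (fun s => F x s) t

/- ### Auxiliary calculus lemmas -/

lemma contDiffAt_two_open {f : ℝ → ℝ} {x : ℝ} (hf : ContDiffAt ℝ 2 f x) :
    ∃ u : Set ℝ, IsOpen u ∧ x ∈ u ∧ ContDiffOn ℝ 2 f u := by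
  obtain ⟨u, hu, hfu⟩ := hf.contDiffOn (le_refl 2) (by simp)
  exact ⟨interior u, isOpen_interior, mem_interior_iff_mem_nhds.2 hu,
    hfu.mono interior_subset⟩

lemma contDiffAt_two_diffAt_deriv {f : ℝ → ℝ} {x : ℝ} (hf : ContDiffAt ℝ 2 f x) :
    DifferentiableAt ℝ (deriv f) x := by
  obtain ⟨u, huo, hxu, hfu⟩ := contDiffAt_two_open hf
  have h1 : ContDiffOn ℝ 1 (deriv f) u := hfu.deriv_of_isOpen huo (by norm_num)
  exact (h1.differentiableOn one_ne_zero x hxu).differentiableAt (huo.mem_nhds hxu)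

/-- Second derivative test: at a local max of a `C²` function, `f'' ≤ 0`. -/
lemma second_deriv_nonpos_of_isLocalMax {f : ℝ → ℝ} {x : ℝ}
    (hf : ContDiffAt ℝ 2 f x) (h : IsLocalMax f x) : deriv (deriv f) x ≤ 0 := by
  by_contra hpos
  push_neg at hpos
  obtain ⟨u, huo, hxu, hfu⟩ := contDiffAt_two_open hf
  have hd0 : deriv f x = 0 := h.deriv_eq_zero
  have hdd : HasDerivAt (deriv f) (deriv (deriv f) x) x :=
    (contDiffAt_two_diffAt_deriv hf).hasDerivAt
  have hslope := hasDerivAt_iff_tendsto_slope.1 hdd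
  have hslopeR : Tendsto (slope (deriv f) x) (𝓝[>] x) (𝓝 (deriv (deriv f) x)) :=
    hslope.mono_left (nhdsWithin_mono x (by intro y hy; exact ne_of_gt hy))
  have hev : ∀ᶠ y in 𝓝[>] x, 0 < slope (deriv f) x y :=
    hslopeR.eventually (eventually_gt_nhds hpos)
  have hu' : u ∈ 𝓝 x := huo.mem_nhds hxu
  have hmax : ∀ᶠ y in 𝓝 x, f y ≤ f x := h
  have hevu : ∀ᶠ y in 𝓝 x, y ∈ u := hu'
  obtain ⟨v, hvnhds, hv⟩ :=
    eventually_iff_exists_mem.1 (((hevu.and hmax).filter_mono nhdsWithin_le_nhds).and hev)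
  obtain ⟨η, hη, hsub⟩ := mem_nhdsGT_iff_exists_Ioo_subset.1 hvnhds
  have key : ∀ y ∈ Ioo x η, y ∈ u ∧ f y ≤ f x ∧ 0 < deriv f y := by
    intro y hy
    have := hv y (hsub hy)
    refine ⟨this.1.1, this.1.2, ?_⟩
    have hs : 0 < slope (deriv f) x y := this.2
    rw [slope_def_field, hd0, sub_zero, div_pos_iff] at hs
    rcases hs with ⟨h1, _⟩ | ⟨_, h2⟩
    · exact h1
    · linarith [hy.1]
  have hxη : x < η := hη
  obtain ⟨y, hy⟩ : ∃ y, y ∈ Ioo x η := ⟨(x + η)/2, ⟨by linarith, by linarith⟩⟩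
  have hcont : ContinuousOn f (Icc x y) := by
    intro z hz
    rcases eq_or_lt_of_le hz.1 with rfl | hlt
    · exact hf.continuousAt.continuousWithinAt
    · have hzu : z ∈ u := (key z ⟨hlt, lt_of_le_of_lt hz.2 hy.2⟩).1
      exact ((hfu.continuousOn z hzu).continuousAt (huo.mem_nhds hzu)).continuousWithinAt
  have hmono : StrictMonoOn f (Icc x y) := by
    apply strictMonoOn_of_deriv_pos (convex_Icc x y) hcont
    intro z hz
    rw [interior_Icc] at hz
    exact (key z ⟨hz.1, lt_trans hz.2 hy.2⟩).2.2
  have : f x < f y := hmono ⟨le_refl x, le_of_lt hy.1⟩ ⟨le_of_lt hy.1, le_refl y⟩ hy.1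
  exact absurd (key y hy).2.1 (not_le.2 this)

lemma deriv2_sub {f g : ℝ → ℝ} {x : ℝ} (hf : ContDiffAt ℝ 2 f x) (hg : ContDiffAt ℝ 2 g x) :
    deriv (deriv (fun y => f y - g y)) x = deriv (deriv f) x - deriv (deriv g) x := by
  obtain ⟨u, huo, hxu, hfu⟩ := contDiffAt_two_open hf
  obtain ⟨v, hvo, hxv, hgv⟩ := contDiffAt_two_open hg
  have hev : (deriv fun y => f y - g y) =ᶠ[𝓝 x] fun y => deriv f y - deriv g y := by
    filter_upwards [(huo.inter hvo).mem_nhds ⟨hxu, hxv⟩] with y hy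
    exact deriv_sub
      ((hfu.differentiableOn (by norm_num) y hy.1).differentiableAt (huo.mem_nhds hy.1))
      ((hgv.differentiableOn (by norm_num) y hy.2).differentiableAt (hvo.mem_nhds hy.2))
  rw [hev.deriv_eq]
  exact deriv_sub (contDiffAt_two_diffAt_deriv hf) (contDiffAt_two_diffAt_deriv hg)

/-- At a maximum from the left, the derivative is nonnegative. -/
lemma deriv_nonneg_of_left_max {h : ℝ → ℝ} {t d : ℝ} (hd : HasDerivAt h d t)
    (hmax : ∀ᶠ s in 𝓝[<] t, h s ≤ h t) : 0 ≤ d := by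
  have hsL : Tendsto (slope h t) (𝓝[<] t) (𝓝 d) :=
    (hasDerivAt_iff_tendsto_slope.1 hd).mono_left
      (nhdsWithin_mono t fun y hy => ne_of_lt hy)
  refine ge_of_tendsto hsL ?_
  filter_upwards [hmax, self_mem_nhdsWithin] with s h1 h2
  rw [slope_def_field]
  exact div_nonneg_of_nonpos (by linarith) (by simp only [mem_Iio] at h2; linarith)

/- ### The backward heat kernel barrier -/

noncomputable def phiH (x₀ b x t : ℝ) : ℝ :=
  Real.exp ((x - x₀) ^ 2 / (b ^ 2 * -t)) / Real.sqrt (-t)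

lemma phiH_pos {x₀ b x t : ℝ} (ht : t < 0) : 0 < phiH x₀ b x t :=
  div_pos (Real.exp_pos _) (Real.sqrt_pos.2 (by linarith))

lemma phiH_hasDerivAt_x (x₀ b t : ℝ) (x : ℝ) :
    HasDerivAt (fun y => phiH x₀ b y t)
      (phiH x₀ b x t * (2 * (x - x₀) / (b ^ 2 * -t))) x := by
  have hq : HasDerivAt (fun y => (y - x₀) ^ 2 / (b ^ 2 * -t))
      (2 * (x - x₀) / (b ^ 2 * -t)) x := by
    have h1 : HasDerivAt (fun y => (y - x₀) ^ 2) (2 * (x - x₀)) x := by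
      have := ((hasDerivAt_id x).sub_const x₀).fun_pow 2
      simpa using this
    exact h1.div_const (b ^ 2 * -t)
  have h2 := (hq.exp).div_const (Real.sqrt (-t))
  refine h2.congr_deriv ?_
  unfold phiH
  ring

lemma phiH_deriv_x (x₀ b t : ℝ) :
    deriv (fun y => phiH x₀ b y t)
      = fun x => phiH x₀ b x t * (2 * (x - x₀) / (b ^ 2 * -t)) := by
  funext x
  exact (phiH_hasDerivAt_x x₀ b t x).deriv

lemma phiH_hasDerivAt_xx (x₀ b t : ℝ) (x : ℝ) :
    HasDerivAt (deriv (fun y => phiH x₀ b y t))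
      (phiH x₀ b x t * ((2 * (x - x₀) / (b ^ 2 * -t)) ^ 2 + 2 / (b ^ 2 * -t))) x := by
  rw [phiH_deriv_x]
  have hg : HasDerivAt (fun y => 2 * (y - x₀) / (b ^ 2 * -t)) (2 / (b ^ 2 * -t)) x := by
    have := (((hasDerivAt_id x).sub_const x₀).const_mul 2).div_const (b ^ 2 * -t)
    simpa using this
  have := (phiH_hasDerivAt_x x₀ b t x).fun_mul hg
  refine this.congr_deriv ?_
  ring

lemma phiH_hasDerivAt_t {x₀ b t : ℝ} (hb : 0 < b) (ht : t < 0) (x : ℝ) :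
    HasDerivAt (fun s => phiH x₀ b x s)
      (phiH x₀ b x t * ((x - x₀) ^ 2 / (b ^ 2 * t ^ 2) + 1 / (2 * -t))) t := by
  have hnt : (0:ℝ) < -t := by linarith
  have hbt : b ^ 2 * -t ≠ 0 := by positivity
  have hst : Real.sqrt (-t) ≠ 0 := ne_of_gt (Real.sqrt_pos.2 hnt)
  have hinner : HasDerivAt (fun s => (x - x₀) ^ 2 / (b ^ 2 * -s))
      ((x - x₀) ^ 2 / (b ^ 2 * t ^ 2)) t := by
    have hden : HasDerivAt (fun s : ℝ => b ^ 2 * -s) (b ^ 2 * -1) t :=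
      ((hasDerivAt_id t).neg.const_mul (b ^ 2))
    have := (hden.fun_inv hbt).const_mul ((x - x₀) ^ 2)
    have heq : (fun s : ℝ => (x - x₀) ^ 2 * (b ^ 2 * -s)⁻¹)
        = fun s => (x - x₀) ^ 2 / (b ^ 2 * -s) := by
      funext s; rw [div_eq_mul_inv]
    rw [heq] at this
    refine this.congr_deriv ?_
    field_simp [hb.ne', ht.ne]
  have hs : HasDerivAt (fun s : ℝ => Real.sqrt (-s)) (-(1 / (2 * Real.sqrt (-t)))) t := by
    have h0 := Real.hasDerivAt_sqrt (x := -t) (ne_of_gt hnt)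
    have := h0.comp t ((hasDerivAt_id t).neg)
    simpa [Function.comp_def] using this
  have hdiv := (hinner.exp).fun_div hs hst
  have heq2 : (fun s => Real.exp ((x - x₀) ^ 2 / (b ^ 2 * -s)) / Real.sqrt (-s))
      = fun s => phiH x₀ b x s := by funext s; rfl
  rw [heq2] at hdiv
  refine hdiv.congr_deriv ?_
  unfold phiH
  have hsq : Real.sqrt (-t) ^ 2 = -t := Real.sq_sqrt (by linarith)
  set E := Real.exp ((x - x₀) ^ 2 / (b ^ 2 * -t)) with hE
  set r := Real.sqrt (-t) with hr
  rw [show t = -r ^ 2 from by rw [hsq]; ring]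
  field_simp
  ring

lemma phiH_identity {b t : ℝ} (hb : b ≠ 0) (ht : t ≠ 0) (z : ℝ) :
    b ^ 2 / 4 * ((2 * z / (b ^ 2 * -t)) ^ 2 + 2 / (b ^ 2 * -t))
      = z ^ 2 / (b ^ 2 * t ^ 2) + 1 / (2 * -t) := by
  field_simp
  ring

lemma phiH_contDiff_x (x₀ b t : ℝ) : ContDiff ℝ 2 (fun y => phiH x₀ b y t) := by
  unfold phiH
  exact (((contDiff_id.sub contDiff_const).pow 2).div_const _).exp.div_const _

lemma phiH_continuousAt {x₀ b : ℝ} (hb : 0 < b) {p : ℝ × ℝ} (hp : p.2 < 0) :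
    ContinuousAt (fun q : ℝ × ℝ => phiH x₀ b q.1 q.2) p := by
  have hnum : ContinuousAt (fun q : ℝ × ℝ => (q.1 - x₀) ^ 2 / (b ^ 2 * -q.2)) p :=
    ContinuousAt.div (by fun_prop) (by fun_prop)
      (ne_of_gt (mul_pos (pow_pos hb 2) (neg_pos.2 hp)))
  exact ContinuousAt.div (Real.continuous_exp.continuousAt.comp hnum)
    ((Real.continuous_sqrt.comp continuous_snd.neg).continuousAt)
    (ne_of_gt (Real.sqrt_pos.2 (neg_pos.2 hp)))

lemma phiH_boundary {x₀ b C t x : ℝ} (hb : 0 < b) (hC : 1 ≤ C) (ht : t ≤ -Real.exp 1)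
    (hx : |x - x₀| = b * Real.sqrt (-t * (Real.log (-t) + 2 * Real.log C) / 2)) :
    phiH x₀ b x t = C := by
  have hC0 : (0:ℝ) < C := lt_of_lt_of_le one_pos hC
  have hnt : Real.exp 1 ≤ -t := by linarith
  have hnt0 : (0:ℝ) < -t := lt_of_lt_of_le (Real.exp_pos 1) hnt
  have hL : 1 ≤ Real.log (-t) := by
    have := Real.log_le_log (Real.exp_pos 1) hnt
    simpa using this
  have hM : 0 ≤ Real.log C := Real.log_nonneg hC
  have hA : 0 ≤ -t * (Real.log (-t) + 2 * Real.log C) / 2 := by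
    apply div_nonneg _ (by norm_num)
    exact mul_nonneg hnt0.le (by linarith)
  have hx2 : (x - x₀) ^ 2 = b ^ 2 * (-t * (Real.log (-t) + 2 * Real.log C) / 2) := by
    rw [← sq_abs, hx, mul_pow, Real.sq_sqrt hA]
  have harg : (x - x₀) ^ 2 / (b ^ 2 * -t) = Real.log (-t) / 2 + Real.log C := by
    have htne : t ≠ 0 := ne_of_lt (by linarith)
    rw [hx2]; field_simp
  unfold phiH
  rw [harg, Real.exp_add, Real.exp_half, Real.exp_log hnt0, Real.exp_log hC0]
  field_simp

/-- Comparison with the backward heat kernel on the regions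
`D = {(x,t) : t ≤ t₀, |x - x₀| ≤ ρ(t)}`, `ρ(t) = b√((-t)(log(-t) + 2 log C)/2)`:
a bounded nonnegative subsolution of `F_t ≤ a·F_xx` with `0 < a ≤ b²/4` that tends
to `0` uniformly on `D` as `t → -∞` satisfies `F(x₀,t) ≤ 1/√(-t)`. -/
theorem heat_kernel_comparison
    (x₀ b C t₀ : ℝ) (hb : 0 < b) (hC : 1 ≤ C) (ht₀ : t₀ ≤ -Real.exp 1)
    (ρ : ℝ → ℝ)
    (hρ : ∀ t : ℝ, ρ t = b * Real.sqrt ((-t) * (Real.log (-t) + 2 * Real.log C) / 2))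
    (D : Set (ℝ × ℝ))
    (hD : D = {p : ℝ × ℝ | p.2 ≤ t₀ ∧ |p.1 - x₀| ≤ ρ p.2})
    (a F : ℝ → ℝ → ℝ)
    (ha : ∀ p ∈ D, 0 < a p.1 p.2 ∧ a p.1 p.2 ≤ b ^ 2 / 4)
    (hFcont : ContinuousOn (fun p : ℝ × ℝ => F p.1 p.2) D)
    (hFreg : ∀ p ∈ interior D,
      ContDiffAt ℝ 2 (fun x => F x p.2) p.1 ∧ ContDiffAt ℝ 1 (fun t => F p.1 t) p.2)
    (hFbd : ∀ p ∈ D, 0 ≤ F p.1 p.2 ∧ F p.1 p.2 ≤ C)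
    (hsub : ∀ p ∈ interior D, dT F p.1 p.2 ≤ a p.1 p.2 * dXX F p.1 p.2)
    (hsmall : ∀ ε > (0 : ℝ), ∃ tε ≤ t₀, ∀ p ∈ D, p.2 ≤ tε → F p.1 p.2 ≤ ε) :
    ∀ t ≤ t₀, F x₀ t ≤ 1 / Real.sqrt (-t) := by
  have hb2 : (b:ℝ) ≠ 0 := ne_of_gt hb
  have hC0 : (0:ℝ) < C := lt_of_lt_of_le one_pos hC
  have he : (0:ℝ) < Real.exp 1 := Real.exp_pos 1
  have ht₀0 : t₀ < 0 := lt_of_le_of_lt ht₀ (by linarith)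
  have hρ0 : ∀ s : ℝ, 0 ≤ ρ s := fun s => by rw [hρ s]; positivity
  have hρc : ∀ s : ℝ, s < 0 → ContinuousAt ρ s := by
    intro s hs
    have hfx : ρ = fun u => b * Real.sqrt (-u * (Real.log (-u) + 2 * Real.log C) / 2) :=
      funext hρ
    rw [hfx]
    apply ContinuousAt.mul continuousAt_const
    apply Real.continuous_sqrt.continuousAt.comp
    apply ContinuousAt.div_const
    apply ContinuousAt.mul continuous_neg.continuousAt
    exact ContinuousAt.add
      ((Real.continuousAt_log (by simp only [ne_eq, neg_eq_zero]; linarith)).comp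
        continuous_neg.continuousAt) continuousAt_const
  have hx₀D : ∀ s ≤ t₀, (x₀, s) ∈ D := by
    intro s hs
    rw [hD]
    exact ⟨hs, by simpa using hρ0 s⟩
  -- membership in the open "strict interior" set implies membership in `interior D`
  have hUint : ∀ p : ℝ × ℝ, p.2 < t₀ → |p.1 - x₀| < ρ p.2 → p ∈ interior D := by
    have hg : ContinuousOn (fun p : ℝ × ℝ => |p.1 - x₀| - ρ p.2) {p : ℝ × ℝ | p.2 < t₀} := by
      intro p hp
      have hp2 : p.2 < 0 := lt_trans hp ht₀0
      exact (ContinuousAt.sub (by fun_prop)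
        ((hρc p.2 hp2).comp continuous_snd.continuousAt)).continuousWithinAt
    have hUopen : IsOpen {p : ℝ × ℝ | p.2 < t₀ ∧ |p.1 - x₀| < ρ p.2} := by
      have heq : {p : ℝ × ℝ | p.2 < t₀ ∧ |p.1 - x₀| < ρ p.2}
          = {p : ℝ × ℝ | p.2 < t₀} ∩ (fun p : ℝ × ℝ => |p.1 - x₀| - ρ p.2) ⁻¹' Iio 0 := by
        ext p
        simp only [mem_setOf_eq, mem_inter_iff, mem_preimage, mem_Iio, sub_neg]
      rw [heq]
      exact hg.isOpen_inter_preimage (isOpen_lt continuous_snd continuous_const) isOpen_Iio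
    have hUsub : {p : ℝ × ℝ | p.2 < t₀ ∧ |p.1 - x₀| < ρ p.2} ⊆ D := by
      rw [hD]; exact fun p hp => ⟨hp.1.le, hp.2.le⟩
    intro p h1 h2
    exact interior_maximal hUsub hUopen ⟨h1, h2⟩
  -- ### main claim: the barrier dominates F strictly inside
  have key : ∀ t1 < t₀, ∀ x' t' : ℝ, t' ≤ t1 → |x' - x₀| ≤ ρ t' →
      F x' t' ≤ phiH x₀ b x' t' := by
    intro t1 ht1 x' t' ht' hx'
    have ht10 : t1 < 0 := lt_trans ht1 ht₀0
    have ht'0 : t' < 0 := lt_of_le_of_lt ht' ht10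
    have hx'D : (x', t') ∈ D := by rw [hD]; exact ⟨le_trans ht' ht1.le, hx'⟩
    by_contra hcon
    push_neg at hcon
    set gap := F x' t' - phiH x₀ b x' t' with hgap
    have hgap0 : 0 < gap := by simp only [hgap]; linarith
    obtain ⟨tε, htε, hFε⟩ := hsmall (gap / 4) (by positivity)
    by_cases hcase : t' ≤ tε
    · have hsm := hFε (x', t') hx'D hcase
      have hphipos : 0 < phiH x₀ b x' t' := phiH_pos ht'0
      simp only at hsm
      linarith
    · push_neg at hcase
      set T := tε with hT
      set ε := gap / 4 with hεdef
      have hε0 : 0 < ε := by positivity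
      have hTt1 : T < t1 := lt_of_lt_of_le hcase ht'
      set δ := ε / (t1 - T) with hδdef
      have hδ0 : 0 < δ := div_pos hε0 (by linarith)
      set K := {p : ℝ × ℝ | T ≤ p.2 ∧ p.2 ≤ t1 ∧ |p.1 - x₀| ≤ ρ p.2} with hK
      set H : ℝ × ℝ → ℝ :=
        fun p => F p.1 p.2 - phiH x₀ b p.1 p.2 - δ * (p.2 - T) - ε with hH
      have hKD : K ⊆ D := by
        intro p hp
        rw [hD]
        exact ⟨le_trans hp.2.1 ht1.le, hp.2.2⟩
      have hKneg : ∀ p : ℝ × ℝ, p ∈ K → p.2 < 0 := fun p hp => lt_of_le_of_lt hp.2.1 ht10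
      -- compactness of K
      obtain ⟨tm, htm_mem, htm⟩ := isCompact_Icc.exists_isMaxOn (nonempty_Icc.2 hTt1.le)
        (fun s hs => (hρc s (lt_of_le_of_lt hs.2 ht10)).continuousWithinAt)
      set M := ρ tm with hM
      have hKclosed : IsClosed K := by
        have heq : K = {p : ℝ × ℝ | p.2 ∈ Icc T t1}
            ∩ (fun p : ℝ × ℝ => |p.1 - x₀| - ρ p.2) ⁻¹' Iic 0 := by
          ext p
          simp only [hK, mem_setOf_eq, mem_inter_iff, mem_Icc, mem_preimage, mem_Iic,
            sub_nonpos]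
          tauto
        rw [heq]
        apply ContinuousOn.preimage_isClosed_of_isClosed
        · intro p hp
          have hp2 : p.2 < 0 := lt_of_le_of_lt hp.2 ht10
          exact (ContinuousAt.sub (by fun_prop)
            ((hρc p.2 hp2).comp continuous_snd.continuousAt)).continuousWithinAt
        · exact isClosed_Icc.preimage continuous_snd
        · exact isClosed_Iic
      have hKcomp : IsCompact K := by
        apply IsCompact.of_isClosed_subset (isCompact_Icc.prod isCompact_Icc
          (s := Icc (x₀ - M) (x₀ + M)) (t := Icc T t1)) hKclosed
        intro p hp
        have h1 : ρ p.2 ≤ M := htm ⟨hp.1, hp.2.1⟩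
        have h2 := abs_le.1 (le_trans hp.2.2 h1)
        exact ⟨⟨by linarith [h2.1], by linarith [h2.2]⟩, hp.1, hp.2.1⟩
      have hHcont : ContinuousOn H K := by
        apply ContinuousOn.sub
        apply ContinuousOn.sub
        apply ContinuousOn.sub
        · exact hFcont.mono hKD
        · exact fun p hp => (phiH_continuousAt hb (hKneg p hp)).continuousWithinAt
        · exact (continuous_const.mul (continuous_snd.sub continuous_const)).continuousOn
        · exact continuousOn_const
      have hx'K : (x', t') ∈ K := ⟨hcase.le, ht', hx'⟩
      obtain ⟨pm, hpmK, hpmMax⟩ := hKcomp.exists_isMaxOn ⟨_, hx'K⟩ hHcont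
      have hpmK' : T ≤ pm.2 ∧ pm.2 ≤ t1 ∧ |pm.1 - x₀| ≤ ρ pm.2 := hpmK
      obtain ⟨hpm1, hpm2, hpm3⟩ := hpmK'
      have hpmt0 : pm.2 < 0 := lt_of_le_of_lt hpm2 ht10
      have hpmD : pm ∈ D := hKD hpmK
      -- the max of H on K is ≤ 0
      have hHm : H pm ≤ 0 := by
        by_contra hpos
        push_neg at hpos
        rcases eq_or_lt_of_le hpm3 with hbdy | hint
        · -- side boundary : φ = C ≥ F
          have hphiC : phiH x₀ b pm.1 pm.2 = C := by
            apply phiH_boundary hb hC ((le_trans hpm2 ht1.le).trans ht₀)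
            rw [hbdy, hρ pm.2]
          have hFC := (hFbd pm hpmD).2
          have hδ1 : 0 ≤ δ * (pm.2 - T) := mul_nonneg hδ0.le (by linarith)
          simp only [hH] at hpos
          rw [hphiC] at hpos
          linarith
        rcases eq_or_lt_of_le hpm1 with hbot | hTlt
        · -- bottom : F ≤ ε there
          have hFsm := hFε pm hpmD (le_of_eq hbot.symm)
          have hphip : 0 < phiH x₀ b pm.1 pm.2 := phiH_pos hpmt0
          have hzero : δ * (pm.2 - T) = 0 := by rw [← hbot]; ring
          simp only [hH] at hpos
          rw [hzero] at hpos
          linarith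
        · -- genuine interior point : maximum principle
          have hpmint : pm ∈ interior D := hUint pm (lt_of_le_of_lt hpm2 ht1) hint
          obtain ⟨hFx2, hFt1c⟩ := hFreg pm hpmint
          obtain ⟨ha1, ha2⟩ := ha pm hpmD
          -- spatial local max
          have hlocx : IsLocalMax
              (fun y => F y pm.2 - (phiH x₀ b y pm.2 + (δ * (pm.2 - T) + ε))) pm.1 := by
            have hev : ∀ᶠ y in 𝓝 pm.1, |y - x₀| < ρ pm.2 :=
              ContinuousAt.eventually_lt (by fun_prop) continuousAt_const hint
            filter_upwards [hev] with y hy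
            have hyK : (y, pm.2) ∈ K := ⟨hpm1, hpm2, hy.le⟩
            have hle := hpmMax hyK
            simp only [hH, mem_setOf_eq] at hle
            show F y pm.2 - (phiH x₀ b y pm.2 + (δ * (pm.2 - T) + ε))
              ≤ F pm.1 pm.2 - (phiH x₀ b pm.1 pm.2 + (δ * (pm.2 - T) + ε))
            linarith
          have hg2 : ContDiffAt ℝ 2
              (fun y => phiH x₀ b y pm.2 + (δ * (pm.2 - T) + ε)) pm.1 :=
            ((phiH_contDiff_x x₀ b pm.2).add contDiff_const).contDiffAt
          have hxx := second_deriv_nonpos_of_isLocalMax (hFx2.sub hg2) hlocx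
          rw [deriv2_sub hFx2 hg2] at hxx
          have hderg : deriv (deriv (fun y => phiH x₀ b y pm.2 + (δ * (pm.2 - T) + ε))) pm.1
              = phiH x₀ b pm.1 pm.2
                * ((2 * (pm.1 - x₀) / (b ^ 2 * -pm.2)) ^ 2 + 2 / (b ^ 2 * -pm.2)) := by
            rw [deriv_add_const' (δ * (pm.2 - T) + ε)]
            exact (phiH_hasDerivAt_xx x₀ b pm.2 pm.1).deriv
          rw [hderg] at hxx
          have hxxF : dXX F pm.1 pm.2 ≤ phiH x₀ b pm.1 pm.2
              * ((2 * (pm.1 - x₀) / (b ^ 2 * -pm.2)) ^ 2 + 2 / (b ^ 2 * -pm.2)) := by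
            have : dXX F pm.1 pm.2 = deriv (deriv (fun y => F y pm.2)) pm.1 := rfl
            linarith [hxx]
          -- time derivative at the max
          have hht : HasDerivAt (fun s => F pm.1 s - phiH x₀ b pm.1 s - δ * (s - T) - ε)
              (deriv (fun s => F pm.1 s) pm.2
                - phiH x₀ b pm.1 pm.2 * ((pm.1 - x₀) ^ 2 / (b ^ 2 * pm.2 ^ 2) + 1 / (2 * -pm.2))
                - δ) pm.2 := by
            have h1 : HasDerivAt (fun s => F pm.1 s) (deriv (fun s => F pm.1 s) pm.2) pm.2 :=
              (hFt1c.differentiableAt one_ne_zero).hasDerivAt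
            have h2 := phiH_hasDerivAt_t (x₀ := x₀) hb hpmt0 pm.1
            have h3 : HasDerivAt (fun s : ℝ => δ * (s - T)) δ pm.2 := by
              simpa using ((hasDerivAt_id pm.2).sub_const T).const_mul δ
            exact ((h1.sub h2).sub h3).sub_const ε
          have hts : 0 ≤ deriv (fun s => F pm.1 s) pm.2
              - phiH x₀ b pm.1 pm.2 * ((pm.1 - x₀) ^ 2 / (b ^ 2 * pm.2 ^ 2) + 1 / (2 * -pm.2))
              - δ := by
            apply deriv_nonneg_of_left_max hht
            have hev1 : ∀ᶠ s in 𝓝 pm.2, |pm.1 - x₀| < ρ s :=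
              ContinuousAt.eventually_lt continuousAt_const (hρc pm.2 hpmt0) hint
            have hev2 : ∀ᶠ s in 𝓝 pm.2, T < s := eventually_gt_nhds hTlt
            filter_upwards [(hev1.and hev2).filter_mono nhdsWithin_le_nhds,
              self_mem_nhdsWithin] with s hs hs2
            simp only [mem_Iio] at hs2
            have hsK : (pm.1, s) ∈ K := ⟨hs.2.le, le_trans hs2.le hpm2, hs.1.le⟩
            have hle := hpmMax hsK
            simp only [hH, mem_setOf_eq] at hle
            exact hle
          -- combine
          have hdT := hsub pm hpmint
          have hφxx0 : 0 ≤ phiH x₀ b pm.1 pm.2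
              * ((2 * (pm.1 - x₀) / (b ^ 2 * -pm.2)) ^ 2 + 2 / (b ^ 2 * -pm.2)) := by
            have hnt : (0:ℝ) < -pm.2 := neg_pos.2 hpmt0
            apply mul_nonneg (phiH_pos hpmt0).le
            positivity
          have hchain : a pm.1 pm.2 * dXX F pm.1 pm.2 ≤ (b ^ 2 / 4)
              * (phiH x₀ b pm.1 pm.2
                * ((2 * (pm.1 - x₀) / (b ^ 2 * -pm.2)) ^ 2 + 2 / (b ^ 2 * -pm.2))) :=
            le_trans (mul_le_mul_of_nonneg_left hxxF ha1.le)
              (mul_le_mul_of_nonneg_right ha2 hφxx0)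
          have hid : (b ^ 2 / 4) * (phiH x₀ b pm.1 pm.2
              * ((2 * (pm.1 - x₀) / (b ^ 2 * -pm.2)) ^ 2 + 2 / (b ^ 2 * -pm.2)))
              = phiH x₀ b pm.1 pm.2
                * ((pm.1 - x₀) ^ 2 / (b ^ 2 * pm.2 ^ 2) + 1 / (2 * -pm.2)) := by
            rw [show b ^ 2 / 4 * (phiH x₀ b pm.1 pm.2
              * ((2 * (pm.1 - x₀) / (b ^ 2 * -pm.2)) ^ 2 + 2 / (b ^ 2 * -pm.2)))
              = phiH x₀ b pm.1 pm.2 * (b ^ 2 / 4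
                * ((2 * (pm.1 - x₀) / (b ^ 2 * -pm.2)) ^ 2 + 2 / (b ^ 2 * -pm.2))) from by ring,
              phiH_identity hb2 (ne_of_lt hpmt0) (pm.1 - x₀)]
          have hdTeq : dT F pm.1 pm.2 = deriv (fun s => F pm.1 s) pm.2 := rfl
          rw [hdTeq] at hdT
          linarith [hdT, hts, hchain, hid, hδ0]
      -- conclude: contradiction with hcon
      have hfin := hpmMax hx'K
      have hδT : δ * (t1 - T) = ε := div_mul_cancel₀ _ (by linarith : t1 - T ≠ 0)
      have h1 : δ * (t' - T) ≤ ε := by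
        rw [← hδT]
        exact mul_le_mul_of_nonneg_left (by linarith) hδ0.le
      simp only [hH, mem_setOf_eq] at hfin
      simp only [hH] at hHm
      linarith
  -- ### conclusion
  intro t ht
  rcases eq_or_lt_of_le ht with rfl | htlt
  · -- limit as t' → t from the left
    have hmem : (x₀, t) ∈ D := hx₀D t le_rfl
    have hcw : ContinuousWithinAt (fun p : ℝ × ℝ => F p.1 p.2) D (x₀, t) := hFcont _ hmem
    have hmap : Tendsto (fun s : ℝ => ((x₀, s) : ℝ × ℝ)) (𝓝[<] t) (𝓝[D] (x₀, t)) := by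
      apply tendsto_nhdsWithin_of_tendsto_nhds_of_eventually_within
      · exact ((continuous_const.prodMk continuous_id).tendsto t).mono_left
          nhdsWithin_le_nhds
      · filter_upwards [self_mem_nhdsWithin] with s hs
        exact hx₀D s (le_of_lt hs)
    have h1 : Tendsto (fun s => F x₀ s) (𝓝[<] t) (𝓝 (F x₀ t)) := hcw.tendsto.comp hmap
    have h2 : Tendsto (fun s => 1 / Real.sqrt (-s)) (𝓝[<] t) (𝓝 (1 / Real.sqrt (-t))) := by
      apply Tendsto.mono_left _ nhdsWithin_le_nhds
      apply ContinuousAt.tendsto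
      exact ContinuousAt.div continuousAt_const
        ((Real.continuous_sqrt.comp continuous_neg).continuousAt)
        (ne_of_gt (Real.sqrt_pos.2 (by linarith)))
    refine le_of_tendsto_of_tendsto h1 h2 ?_
    filter_upwards [self_mem_nhdsWithin] with s hs
    simp only [mem_Iio] at hs
    have := key s hs x₀ s le_rfl (by simpa using hρ0 s)
    simpa [phiH] using this
  · have := key t htlt x₀ t le_rfl (by simpa using hρ0 t)
    simpa [phiH] using this
end

section
/- Let a, b, d: (-∞, 0) → ℝ be differentiable with a(t) > 0 and b(t) > 0 for all t < 0, and define w(x,t) := a(t)·e^{2x} + b(t)·e^{-2x} + d(t). If w satisfies the cylindrical pressure equation ∂_t w = w·∂_xx w - (∂_x w)² at every point of ℝ × (-∞, 0), then a' = 4ad, b' = 4bd, and d' = 16ab on (-∞, 0), and there exists a constant λ > 0 such that b(t) = λ²·a(t) for all t < 0. -/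
open Real Set

/-- If `w(x,t) = a(t)e^{2x} + b(t)e^{-2x} + d(t)` with `a, b > 0` solves the
cylindrical pressure equation `w_t = w·w_xx - w_x²` on `ℝ × (-∞,0)`, then
`a' = 4ad`, `b' = 4bd`, `d' = 16ab`, and `b = λ²·a` for some constant `λ > 0`. -/
theorem ode_system_from_pressure_equation
    (a b d : ℝ → ℝ)
    (hdiff : ∀ t < (0 : ℝ), DifferentiableAt ℝ a t ∧ DifferentiableAt ℝ b t ∧
      DifferentiableAt ℝ d t)
    (hapos : ∀ t < (0 : ℝ), 0 < a t) (hbpos : ∀ t < (0 : ℝ), 0 < b t)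
    (w : ℝ → ℝ → ℝ)
    (hw : ∀ x t, w x t = a t * Real.exp (2 * x) + b t * Real.exp (-(2 * x)) + d t)
    (hpde : ∀ x : ℝ, ∀ t < (0 : ℝ),
      deriv (fun s => w x s) t =
        w x t * deriv (deriv (fun s => w s t)) x - (deriv (fun s => w s t) x) ^ 2) :
    (∀ t < (0 : ℝ),
      deriv a t = 4 * a t * d t ∧
      deriv b t = 4 * b t * d t ∧
      deriv d t = 16 * a t * b t) ∧
    ∃ l > (0 : ℝ), ∀ t < (0 : ℝ), b t = l ^ 2 * a t := by
  -- derivative helpers in x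
  have hexp : ∀ x : ℝ, HasDerivAt (fun s : ℝ => Real.exp (2 * s)) (2 * Real.exp (2 * x)) x := by
    intro x
    have h1 : HasDerivAt (fun s : ℝ => 2 * s) 2 x := by
      simpa using (hasDerivAt_id x).const_mul 2
    simpa [Function.comp_def, mul_comm] using (Real.hasDerivAt_exp (2 * x)).comp x h1
  have hexpn : ∀ x : ℝ, HasDerivAt (fun s : ℝ => Real.exp (-(2 * s)))
      (-2 * Real.exp (-(2 * x))) x := by
    intro x
    have h1 : HasDerivAt (fun s : ℝ => -(2 * s)) (-2) x := by
      simpa [Pi.neg_def] using ((hasDerivAt_id x).const_mul 2).neg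
    simpa [Function.comp_def, mul_comm] using (Real.hasDerivAt_exp (-(2 * x))).comp x h1
  -- spatial derivatives of w(·, t)
  have hx1 : ∀ t x : ℝ, deriv (fun s => w s t) x =
      2 * a t * Real.exp (2 * x) - 2 * b t * Real.exp (-(2 * x)) := by
    intro t x
    have hfun : (fun s => w s t) =
        fun s => a t * Real.exp (2 * s) + b t * Real.exp (-(2 * s)) + d t :=
      funext fun s => hw s t
    rw [hfun]
    have h : HasDerivAt (fun s => a t * Real.exp (2 * s) + b t * Real.exp (-(2 * s)) + d t)
        (a t * (2 * Real.exp (2 * x)) + b t * (-2 * Real.exp (-(2 * x))) + 0) x := by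
      exact (((hexp x).const_mul (a t)).add ((hexpn x).const_mul (b t))).add
        (hasDerivAt_const x (d t))
    rw [h.deriv]; ring
  have hx2 : ∀ t x : ℝ, deriv (deriv (fun s => w s t)) x =
      4 * a t * Real.exp (2 * x) + 4 * b t * Real.exp (-(2 * x)) := by
    intro t x
    have hfun : deriv (fun s => w s t) =
        fun s => 2 * a t * Real.exp (2 * s) - 2 * b t * Real.exp (-(2 * s)) :=
      funext fun s => hx1 t s
    rw [hfun]
    have h : HasDerivAt (fun s => 2 * a t * Real.exp (2 * s) - 2 * b t * Real.exp (-(2 * s)))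
        (2 * a t * (2 * Real.exp (2 * x)) - 2 * b t * (-2 * Real.exp (-(2 * x)))) x :=
      ((hexp x).const_mul (2 * a t)).sub ((hexpn x).const_mul (2 * b t))
    rw [h.deriv]; ring
  -- time derivative of w(x, ·)
  have ht1 : ∀ x : ℝ, ∀ t < (0 : ℝ), deriv (fun s => w x s) t =
      deriv a t * Real.exp (2 * x) + deriv b t * Real.exp (-(2 * x)) + deriv d t := by
    intro x t ht
    obtain ⟨ha, hb, hd⟩ := hdiff t ht
    have hfun : (fun s => w x s) =
        fun s => a s * Real.exp (2 * x) + b s * Real.exp (-(2 * x)) + d s :=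
      funext fun s => hw x s
    rw [hfun]
    have h : HasDerivAt (fun s => a s * Real.exp (2 * x) + b s * Real.exp (-(2 * x)) + d s)
        (deriv a t * Real.exp (2 * x) + deriv b t * Real.exp (-(2 * x)) + deriv d t) t :=
      ((ha.hasDerivAt.mul_const _).add (hb.hasDerivAt.mul_const _)).add hd.hasDerivAt
    exact h.deriv
  -- the key algebraic relation for all u = e^{2x}
  have key : ∀ x : ℝ, ∀ t < (0 : ℝ),
      deriv a t * Real.exp (2 * x) + deriv b t * Real.exp (-(2 * x)) + deriv d t =
      16 * a t * b t + 4 * a t * d t * Real.exp (2 * x) +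
        4 * b t * d t * Real.exp (-(2 * x)) := by
    intro x t ht
    have h := hpde x t ht
    rw [ht1 x t ht, hx1 t x, hx2 t x, hw x t] at h
    have huv : Real.exp (2 * x) * Real.exp (-(2 * x)) = 1 := by
      rw [← Real.exp_add]; simp
    linear_combination h + 16 * a t * b t * huv
  have hode : ∀ t < (0 : ℝ),
      deriv a t = 4 * a t * d t ∧ deriv b t = 4 * b t * d t ∧
        deriv d t = 16 * a t * b t := by
    intro t ht
    have e1 := key 0 t ht
    have e2 := key (Real.log 2 / 2) t ht
    have e3 := key (-(Real.log 2 / 2)) t ht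
    have h2 : Real.exp (2 * (Real.log 2 / 2)) = 2 := by
      rw [show 2 * (Real.log 2 / 2) = Real.log 2 by ring, Real.exp_log]; norm_num
    have h2' : Real.exp (-(2 * (Real.log 2 / 2))) = 1 / 2 := by
      rw [Real.exp_neg, h2]; norm_num
    rw [h2, h2'] at e2
    rw [show (2 : ℝ) * -(Real.log 2 / 2) = -(2 * (Real.log 2 / 2)) by ring] at e3
    rw [neg_neg, h2, h2'] at e3
    simp only [mul_zero, neg_zero, Real.exp_zero, mul_one] at e1
    refine ⟨by linarith, by linarith, by linarith⟩
  refine ⟨hode, ?_⟩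
  -- b/a is constant on Iio 0
  have hquot : ∀ x ∈ Iio (0 : ℝ), ∀ y ∈ Iio (0 : ℝ),
      b x / a x = b y / a y := by
    have hd0 : ∀ t ∈ Iio (0 : ℝ), HasDerivAt (fun s => b s / a s) 0 t := by
      intro t ht
      simp only [mem_Iio] at ht
      obtain ⟨ha, hb, _⟩ := hdiff t ht
      obtain ⟨h1, h2, _⟩ := hode t ht
      have h : HasDerivAt (fun s => b s / a s)
          ((deriv b t * a t - b t * deriv a t) / (a t) ^ 2) t :=
        hb.hasDerivAt.div ha.hasDerivAt (hapos t ht).ne'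
      have : (deriv b t * a t - b t * deriv a t) / (a t) ^ 2 = 0 := by
        rw [h1, h2]; ring_nf
      rwa [this] at h
    intro x hx y hy
    refine Convex.is_const_of_fderivWithin_eq_zero (convex_Iio (0:ℝ))
      (fun z hz => ((hd0 z hz).differentiableAt.differentiableWithinAt)) ?_ hx hy
    intro z hz
    rw [fderivWithin_of_isOpen isOpen_Iio hz]
    have : deriv (fun s => b s / a s) z = 0 := (hd0 z hz).deriv
    ext
    simp [← toSpanSingleton_deriv, this]
  set c := b (-1) / a (-1) with hc
  have hm1 : (-1 : ℝ) ∈ Iio (0 : ℝ) := by norm_num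
  have hcpos : 0 < c := div_pos (hbpos _ (by norm_num)) (hapos _ (by norm_num))
  refine ⟨Real.sqrt c, Real.sqrt_pos.2 hcpos, ?_⟩
  intro t ht
  have h' : b t / a t = c := hquot t ht (-1) hm1
  rw [div_eq_iff (hapos t ht).ne'] at h'
  rw [Real.sq_sqrt hcpos.le, h']
end

section
/- Let a, d: (-∞, 0) → ℝ be differentiable with a(t) > 0 for all t < 0, satisfying a' = 4ad and d' = 4a² on (-∞, 0), and suppose lim_{t → 0⁻} a(t) = +∞. Then either there exists μ > 0 such that a(t) = -μ·csch(4μt) and d(t) = -μ·coth(4μt) for all t < 0, or a(t) = d(t) = 1/(-4t) for all t < 0. -/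
open Real Set Filter Topology

lemma const_on_neg (f : ℝ → ℝ) (hf : ∀ t < (0:ℝ), HasDerivAt f 0 t) :
    ∀ s < (0:ℝ), ∀ t < (0:ℝ), f s = f t := by
  have key : ∀ s t : ℝ, s ≤ t → t < 0 → f t = f s := by
    intro s t hst ht0
    have hsub : Icc s t ⊆ Iio (0:ℝ) := fun x hx => lt_of_le_of_lt hx.2 ht0
    have hcont : ContinuousOn f (Icc s t) := fun x hx =>
      ((hf x (hsub hx)).continuousAt).continuousWithinAt
    exact constant_of_has_deriv_right_zero hcont
      (fun x hx => ((hf x (hsub ⟨hx.1, hx.2.le⟩)).hasDerivWithinAt)) t (right_mem_Icc.2 hst)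
  intro s hs t ht
  rcases le_total s t with h | h
  · exact (key s t h ht).symm
  · exact key t s h hs

set_option maxHeartbeats 2000000 in
/-- The ODE system `a' = 4ad`, `d' = 4a²` with `a > 0` on `(-∞,0)` and `a(t) → ∞`
as `t → 0⁻` has exactly the solutions `a(t) = -μ·csch(4μt)`, `d(t) = -μ·coth(4μt)`
for some `μ > 0` (Rosenau), or `a(t) = d(t) = 1/(-4t)` (contracting spheres). -/
theorem ode_system_classification
    (a d : ℝ → ℝ)
    (hdiff : ∀ t < (0 : ℝ), DifferentiableAt ℝ a t ∧ DifferentiableAt ℝ d t)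
    (hapos : ∀ t < (0 : ℝ), 0 < a t)
    (hode1 : ∀ t < (0 : ℝ), deriv a t = 4 * a t * d t)
    (hode2 : ∀ t < (0 : ℝ), deriv d t = 4 * (a t) ^ 2)
    (hblow : Tendsto a (nhdsWithin 0 (Set.Iio (0 : ℝ))) atTop) :
    (∃ μ > (0 : ℝ), ∀ t < (0 : ℝ),
      a t = -μ * (Real.sinh (4 * μ * t))⁻¹ ∧
      d t = -μ * (Real.cosh (4 * μ * t) / Real.sinh (4 * μ * t))) ∨
    (∀ t < (0 : ℝ), a t = 1 / (-(4 * t)) ∧ d t = 1 / (-(4 * t))) := by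
  have hda : ∀ t < (0:ℝ), HasDerivAt a (4 * a t * d t) t := fun t ht =>
    hode1 t ht ▸ (hdiff t ht).1.hasDerivAt
  have hdd : ∀ t < (0:ℝ), HasDerivAt d (4 * (a t) ^ 2) t := fun t ht =>
    hode2 t ht ▸ (hdiff t ht).2.hasDerivAt
  -- conserved quantity
  set c : ℝ := (d (-1))^2 - (a (-1))^2 with hcdef
  have hconsv : ∀ t < (0:ℝ), (d t)^2 - (a t)^2 = c := by
    have h0 : ∀ t < (0:ℝ), HasDerivAt (fun t => (d t)^2 - (a t)^2) 0 t := by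
      intro t ht
      have h1 := ((hdd t ht).fun_pow 2).fun_sub ((hda t ht).fun_pow 2)
      exact h1.congr_deriv (by ring)
    intro t ht
    exact const_on_neg _ h0 t ht (-1) (by norm_num)
  have hdcont : ContinuousOn d (Iio 0) := fun x hx =>
    ((hdiff x hx).2.continuousAt).continuousWithinAt
  have hacont : ContinuousOn a (Iio 0) := fun x hx =>
    ((hdiff x hx).1.continuousAt).continuousWithinAt
  -- if c ≥ 0 then d > 0 everywhere on (-∞,0)
  have hdpos : 0 ≤ c → ∀ t < (0:ℝ), 0 < d t := by
    intro h0c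
    have hdne : ∀ t < (0:ℝ), d t ≠ 0 := by
      intro t ht h
      have h1 := hconsv t ht
      have h2 := hapos t ht
      rw [h] at h1
      nlinarith
    by_contra h
    push_neg at h
    obtain ⟨t1, ht1, hd1⟩ := h
    have hd1' : d t1 < 0 := lt_of_le_of_ne hd1 (hdne t1 ht1)
    have hneg : ∀ t < (0:ℝ), d t < 0 := by
      intro t ht
      by_contra h'
      push_neg at h'
      have hd2 : 0 < d t := lt_of_le_of_ne h' (Ne.symm (hdne t ht))
      have hpre : IsPreconnected (d '' Iio 0) := isPreconnected_Iio.image d hdcont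
      have h0mem : (0:ℝ) ∈ d '' Iio 0 :=
        hpre.Icc_subset ⟨t1, ht1, rfl⟩ ⟨t, ht, rfl⟩ ⟨hd1'.le, hd2.le⟩
      obtain ⟨t2, ht2, hdt2⟩ := h0mem
      exact hdne t2 ht2 hdt2
    have hanti : StrictAntiOn a (Iio 0) := by
      refine strictAntiOn_of_deriv_neg (convex_Iio 0) hacont ?_
      intro x hx
      rw [interior_Iio] at hx
      rw [hode1 x hx]
      have := hapos x hx
      have := hneg x hx
      nlinarith
    have h1 : ∀ᶠ t in 𝓝[<] (0:ℝ), a (-1) < a t := hblow.eventually_gt_atTop _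
    have h2 : Ioo (-1:ℝ) 0 ∈ 𝓝[<] (0:ℝ) := Ioo_mem_nhdsLT (by norm_num)
    obtain ⟨t, hgt, htio⟩ := (h1.and (eventually_of_mem h2 fun x hx => hx)).exists
    have := hanti (show (-1:ℝ) ∈ Iio 0 by norm_num) (show t ∈ Iio 0 from htio.2) htio.1
    linarith
  clear_value c
  -- case c < 0 is impossible
  rcases lt_trichotomy c 0 with hc | hc | hc
  · exfalso
    set ν : ℝ := Real.sqrt (-c) with hν
    have hνpos : 0 < ν := Real.sqrt_pos.2 (by linarith)
    have hνsq : ν^2 = -c := Real.sq_sqrt (by linarith)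
    have hconst : ∀ t < (0:ℝ),
        Real.arctan (d t / ν) - 4 * ν * t = Real.arctan (d (-1) / ν) - 4 * ν * (-1) := by
      have key : ∀ s < (0:ℝ), HasDerivAt (fun t => Real.arctan (d t / ν) - 4 * ν * t) 0 s := by
        intro s hs
        have h1 : HasDerivAt (fun t => d t / ν) (4 * (a s)^2 / ν) s := (hdd s hs).div_const ν
        have h2 := h1.arctan
        have h3 := h2.sub ((hasDerivAt_id s).const_mul (4*ν))
        have ha2 : (a s)^2 = (d s)^2 + ν^2 := by
          have := hconsv s hs; nlinarith
        have hval : 1 / (1 + (d s / ν) ^ 2) * (4 * (a s)^2 / ν) - 4 * ν * 1 = 0 := by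
          rw [ha2]
          have hd2 : (0:ℝ) < ν^2 + (d s)^2 := by positivity
          field_simp
          ring
        rw [hval] at h3
        exact h3.congr_deriv rfl
      intro t ht
      exact const_on_neg _ key t ht (-1) (by norm_num)
    obtain ⟨K, hK⟩ : ∃ K, ∀ t < (0:ℝ), Real.arctan (d t / ν) = 4 * ν * t + K :=
      ⟨Real.arctan (d (-1) / ν) - 4 * ν * (-1), fun t ht => by linarith [hconst t ht]⟩
    -- choose t very negative
    set t0 : ℝ := min (-1) ((-(π/2) - K - 1) / (4*ν)) with ht0def
    have ht0 : t0 < 0 := lt_of_le_of_lt (min_le_left _ _) (by norm_num)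
    have h4 : 4 * ν * t0 ≤ -(π/2) - K - 1 := by
      have := min_le_right (-1:ℝ) ((-(π/2) - K - 1) / (4*ν))
      calc 4 * ν * t0 ≤ 4 * ν * ((-(π/2) - K - 1) / (4*ν)) := by
            apply mul_le_mul_of_nonneg_left this (by positivity)
        _ = -(π/2) - K - 1 := by field_simp
    have := Real.neg_pi_div_two_lt_arctan (d t0 / ν)
    rw [hK t0 ht0] at this
    linarith
  · -- case c = 0 : contracting spheres
    right
    have hdp := hdpos hc.ge
    have had : ∀ t < (0:ℝ), d t = a t := by
      intro t ht
      have h1 := hconsv t ht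
      have h2 := hapos t ht
      have h3 := hdp t ht
      have h4 : (d t - a t) * (d t + a t) = 0 := by rw [hc] at h1; nlinarith
      rcases mul_eq_zero.1 h4 with h | h
      · linarith
      · linarith
    have hkey : ∀ s < (0:ℝ), HasDerivAt (fun t => -(a t)⁻¹ - 4 * t) 0 s := by
      intro s hs
      have h1 := ((hda s hs).inv (hapos s hs).ne').neg
      have h2 := h1.sub ((hasDerivAt_id s).const_mul 4)
      have hval : -(-(4 * a s * d s) / (a s) ^ 2) - 4 * 1 = 0 := by
        rw [had s hs]
        have := (hapos s hs).ne'
        field_simp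
        ring
      rw [hval] at h2
      exact h2.congr_deriv rfl
    have hconst : ∀ t < (0:ℝ), -(a t)⁻¹ - 4 * t = -(a (-1))⁻¹ - 4 * (-1) := by
      intro t ht
      exact const_on_neg _ hkey t ht (-1) (by norm_num)
    -- the constant is zero, by the limit as t → 0⁻
    have hlim1 : Tendsto (fun t => -(a t)⁻¹ - 4 * t) (𝓝[<] (0:ℝ)) (𝓝 0) := by
      have l1 : Tendsto (fun t => (a t)⁻¹) (𝓝[<] (0:ℝ)) (𝓝 0) := hblow.inv_tendsto_atTop
      have l2 : Tendsto (fun t : ℝ => 4 * t) (𝓝[<] (0:ℝ)) (𝓝 0) := by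
        have : Tendsto (fun t : ℝ => 4 * t) (𝓝 0) (𝓝 (4 * 0)) :=
          (continuous_const.mul continuous_id).tendsto 0
        rw [mul_zero] at this
        exact tendsto_nhdsWithin_of_tendsto_nhds this
      have := l1.neg.sub l2
      simpa using this
    have hlim2 : Tendsto (fun t => -(a t)⁻¹ - 4 * t) (𝓝[<] (0:ℝ))
        (𝓝 (-(a (-1))⁻¹ - 4 * (-1))) := by
      refine tendsto_const_nhds.congr' ?_
      filter_upwards [self_mem_nhdsWithin] with x hx
      exact (hconst x hx).symm
    have hK : -(a (-1))⁻¹ - 4 * (-1) = 0 := tendsto_nhds_unique hlim2 hlim1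
    intro t ht
    have h5 : -(a t)⁻¹ - 4 * t = 0 := by rw [hconst t ht, hK]
    have h6 : (a t)⁻¹ = -(4 * t) := by linarith
    have h7 : a t = (-(4 * t))⁻¹ := by rw [← h6, inv_inv]
    rw [one_div]
    exact ⟨h7, by rw [had t ht]; exact h7⟩
  · -- case c > 0 : Rosenau
    left
    set μ : ℝ := Real.sqrt c with hμ
    have hμpos : 0 < μ := Real.sqrt_pos.2 hc
    have hμsq : μ ^ 2 = c := Real.sq_sqrt hc.le
    clear_value μ
    refine ⟨μ, hμpos, ?_⟩
    have hdp := hdpos hc.le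
    have hdgt : ∀ t < (0:ℝ), μ < d t := by
      intro t ht
      have h1 := hconsv t ht
      have h2 := hapos t ht
      have h3 := hdp t ht
      nlinarith
    -- derivative of log((d-μ)/(d+μ)) - 8μt is zero
    have hkey : ∀ s < (0:ℝ),
        HasDerivAt (fun t => Real.log (d t - μ) - Real.log (d t + μ) - 8 * μ * t) 0 s := by
      intro s hs
      have hgt := hdgt s hs
      have hm : d s - μ ≠ 0 := by linarith
      have hp : d s + μ ≠ 0 := by linarith
      have ha2 : (a s) ^ 2 = (d s) ^ 2 - μ ^ 2 := by
        have := hconsv s hs; linarith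
      have h1 := (((hdd s hs).sub_const μ).log hm).sub (((hdd s hs).add_const μ).log hp)
      have h2 := h1.sub ((hasDerivAt_id s).const_mul (8 * μ))
      have hval : 4 * (a s) ^ 2 / (d s - μ) - 4 * (a s) ^ 2 / (d s + μ) - 8 * μ * 1 = 0 := by
        rw [ha2]
        field_simp
        ring
      rw [hval] at h2
      exact h2.congr_deriv rfl
    have hconst : ∀ t < (0:ℝ),
        Real.log (d t - μ) - Real.log (d t + μ) - 8 * μ * t =
          Real.log (d (-1) - μ) - Real.log (d (-1) + μ) - 8 * μ * (-1) := by
      intro t ht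
      exact const_on_neg _ hkey t ht (-1) (by norm_num)
    set K : ℝ := Real.log (d (-1) - μ) - Real.log (d (-1) + μ) - 8 * μ * (-1) with hKdef
    clear_value K
    -- ratio identity
    have hratio : ∀ t < (0:ℝ), (d t - μ) / (d t + μ) = Real.exp (8 * μ * t + K) := by
      intro t ht
      have hgt := hdgt t ht
      have h1 : Real.log (d t - μ) - Real.log (d t + μ) = 8 * μ * t + K := by
        have := hconst t ht; linarith
      rw [← h1, Real.exp_sub, Real.exp_log (by linarith), Real.exp_log (by linarith)]
    -- d → ∞ as t → 0⁻
    have hdtop : Tendsto d (𝓝[<] (0:ℝ)) atTop := by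
      refine tendsto_atTop_mono' _ ?_ hblow
      filter_upwards [self_mem_nhdsWithin] with t ht
      have h1 := hconsv t ht
      have h2 := hapos t ht
      have h3 := hdp t ht
      nlinarith
    -- K = 0 by comparing limits of the ratio
    have hlim1 : Tendsto (fun t => (d t - μ) / (d t + μ)) (𝓝[<] (0:ℝ)) (𝓝 1) := by
      have l0 : Tendsto (fun x : ℝ => 2 * μ / (x + μ)) atTop (𝓝 0) :=
        Tendsto.div_atTop tendsto_const_nhds (tendsto_atTop_add_const_right _ μ tendsto_id)
      have l1 : Tendsto (fun x : ℝ => 1 - 2 * μ / (x + μ)) atTop (𝓝 1) := by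
        have := (tendsto_const_nhds (x := (1:ℝ))).sub l0
        simpa using this
      refine (l1.comp hdtop).congr' ?_
      filter_upwards [self_mem_nhdsWithin] with t ht
      have hgt := hdgt t ht
      have hp : d t + μ ≠ 0 := by linarith
      show 1 - 2 * μ / (d t + μ) = (d t - μ) / (d t + μ)
      field_simp
      ring
    have hlim2 : Tendsto (fun t => (d t - μ) / (d t + μ)) (𝓝[<] (0:ℝ)) (𝓝 (Real.exp K)) := by
      have l1 : Tendsto (fun t : ℝ => Real.exp (8 * μ * t + K)) (𝓝 0) (𝓝 (Real.exp (8 * μ * 0 + K))) :=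
        (Real.continuous_exp.comp (by continuity)).tendsto 0
      rw [mul_zero, zero_add] at l1
      refine (tendsto_nhdsWithin_of_tendsto_nhds l1).congr' ?_
      filter_upwards [self_mem_nhdsWithin] with t ht
      exact (hratio t ht).symm
    have hK0 : K = 0 := by
      have h1 : Real.exp K = 1 := tendsto_nhds_unique hlim2 hlim1
      have h2 : Real.exp K = Real.exp 0 := by rw [h1, Real.exp_zero]
      exact Real.exp_eq_exp.1 h2
    -- derive the explicit formulas
    intro t ht
    have hgt := hdgt t ht
    have h4μt : 4 * μ * t < 0 := by nlinarith
    have hsinh : Real.sinh (4 * μ * t) < 0 := Real.sinh_neg_iff.2 h4μt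
    set E : ℝ := Real.exp (4 * μ * t) with hEdef
    have hEpos : 0 < E := Real.exp_pos _
    have hElt : E < 1 := Real.exp_lt_one_iff.2 h4μt
    clear_value E
    have hE2 : Real.exp (8 * μ * t) = E * E := by
      rw [hEdef, ← Real.exp_add]; ring_nf
    have heq : d t - μ = E * E * (d t + μ) := by
      have h1 := hratio t ht
      rw [hK0, add_zero, hE2] at h1
      have hp : d t + μ ≠ 0 := by linarith
      field_simp at h1
      linarith
    have hexpneg : Real.exp (-(4 * μ * t)) = E⁻¹ := by
      rw [Real.exp_neg, hEdef]
    have hd_formula : d t = -μ * (Real.cosh (4 * μ * t) / Real.sinh (4 * μ * t)) := by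
      rw [Real.cosh_eq, Real.sinh_eq, hexpneg, ← hEdef]
      have hEip : 0 < E⁻¹ := inv_pos.2 hEpos
      have hEE : E * E⁻¹ = 1 := mul_inv_cancel₀ hEpos.ne'
      have hlt : E - E⁻¹ < 0 := by nlinarith [mul_pos (sub_pos.2 hElt) hEip]
      have h1 : E - E⁻¹ ≠ 0 := hlt.ne
      have hB : (E - E⁻¹) / 2 ≠ 0 := by
        intro h
        apply h1
        linarith
      rw [← mul_div_assoc, eq_div_iff hB]
      linear_combination (-(E⁻¹) / 2) * heq - ((d t + μ) * E / 2) * hEE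
    refine ⟨?_, hd_formula⟩
    -- a from its square
    have ha2 : (a t) ^ 2 = (d t) ^ 2 - μ ^ 2 := by
      have := hconsv t ht; linarith
    have hg : (0:ℝ) < -μ * (Real.sinh (4 * μ * t))⁻¹ := by
      have h1 : (Real.sinh (4 * μ * t))⁻¹ < 0 := inv_neg''.2 hsinh
      nlinarith
    have hgsq : (-μ * (Real.sinh (4 * μ * t))⁻¹) ^ 2 = (a t) ^ 2 := by
      rw [ha2, hd_formula]
      have h1 := Real.cosh_sq_sub_sinh_sq (4 * μ * t)
      have hss : Real.sinh (4 * μ * t) * (Real.sinh (4 * μ * t))⁻¹ = 1 :=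
        mul_inv_cancel₀ hsinh.ne
      linear_combination (-(μ^2) * ((Real.sinh (4 * μ * t))⁻¹)^2) * h1 -
        (μ^2 * (Real.sinh (4 * μ * t) * (Real.sinh (4 * μ * t))⁻¹ + 1)) * hss
    have hfin : (a t - -μ * (Real.sinh (4 * μ * t))⁻¹) *
        (a t + -μ * (Real.sinh (4 * μ * t))⁻¹) = 0 := by linear_combination (-1 : ℝ) * hgsq
    rcases mul_eq_zero.1 hfin with h | h
    · linarith
    · have := hapos t ht; linarith
end
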